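/- arXiv:2012.11414 — 3 statements merged into one kernel-verified Lean document; each statement's English description precedes it below -/
import Mathlib

section
/- Consider a finite directed graph with vertex subsets X̄, C̄, and a set N with a distinguished vertex w_i ∈ N. Suppose: (1) b_{X̄ → N ∪ C̄} = b_{X̄ → (N∖{w_i}) ∪ C̄} + 1, and (2) b_{X̄ → (N∖{w_i}) ∪ C̄} = b_{X̄ → C̄}, where b denotes the maximum number of pairwise vertex-disjoint directed paths. Then every minimum X̄ – ((N∖{w_i}) ∪ C̄) disconnecting set D satisfies: b_{X̄ → {w_i} ∪ D} = |D| + 1 and b_{D → C̄} = |D|. -/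
/-- A directed path from `A` to `B`: a nonempty duplicate-free list of vertices,
consecutive vertices joined by edges, starting in `A` and ending in `B`.
A single vertex counts as a path to itself. -/
def IsDiPath {V : Type*} (Adj : V → V → Prop) (A B : Set V) (l : List V) : Prop :=
  l ≠ [] ∧ l.Chain' Adj ∧ l.Nodup ∧
    ∀ h : l ≠ [], l.head h ∈ A ∧ l.getLast h ∈ B

/-- There exist `k` pairwise vertex-disjoint directed paths from `A` to `B`. -/
def HasDisjointPaths {V : Type*} (Adj : V → V → Prop) (A B : Set V) (k : ℕ) : Prop :=
  ∃ f : Fin k → List V, (∀ i, IsDiPath Adj A B (f i)) ∧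
    ∀ i j, i ≠ j → (f i).Disjoint (f j)

/-- The maximum number of pairwise vertex-disjoint directed paths from `A` to `B`. -/
noncomputable def maxDisjointPaths {V : Type*} (Adj : V → V → Prop) (A B : Set V) : ℕ :=
  sSup {k | HasDisjointPaths Adj A B k}

/-- `D` is an `A`–`B` disconnecting set: every directed path from `A` to `B`
contains a vertex of `D`. -/
def IsDisconnecting {V : Type*} (Adj : V → V → Prop) (A B D : Set V) : Prop :=
  ∀ l, IsDiPath Adj A B l → ∃ v ∈ D, v ∈ l


namespace MengerAux

variable {V : Type*}

theorem hasDisjointPaths_zero (Adj : V → V → Prop) (A B : Set V) :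
    HasDisjointPaths Adj A B 0 :=
  ⟨fun i => i.elim0, fun i => i.elim0, fun i => i.elim0⟩

theorem hasDisjointPaths_mono_nat {Adj : V → V → Prop} {A B : Set V} {j k : ℕ}
    (h : HasDisjointPaths Adj A B k) (hjk : j ≤ k) : HasDisjointPaths Adj A B j := by
  obtain ⟨f, hf, hd⟩ := h
  exact ⟨fun i => f (Fin.castLE hjk i), fun i => hf _,
    fun i j hij => hd _ _ (by simpa [Fin.ext_iff] using Fin.val_ne_of_ne hij)⟩

theorem hasDisjointPaths_mono_adj {Adj Adj' : V → V → Prop} {A B : Set V} {k : ℕ}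
    (hAdj : ∀ a b, Adj' a b → Adj a b) (h : HasDisjointPaths Adj' A B k) :
    HasDisjointPaths Adj A B k := by
  obtain ⟨f, hf, hd⟩ := h
  refine ⟨f, fun i => ?_, hd⟩
  obtain ⟨h1, h2, h3, h4⟩ := hf i
  exact ⟨h1, h2.imp hAdj, h3, h4⟩

theorem le_card_of_disconnecting {Adj : V → V → Prop} {A B : Set V} {k : ℕ}
    (h : HasDisjointPaths Adj A B k) (D : Finset V)
    (hD : IsDisconnecting Adj A B ↑D) : k ≤ D.card := by
  classical
  obtain ⟨f, hf, hd⟩ := h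
  have : ∀ i : Fin k, ∃ v, v ∈ D ∧ v ∈ f i := by
    intro i
    obtain ⟨v, hv1, hv2⟩ := hD _ (hf i)
    exact ⟨v, hv1, hv2⟩
  choose g hg1 hg2 using this
  have : (Finset.univ : Finset (Fin k)).card ≤ D.card := by
    refine Finset.card_le_card_of_injOn g (fun i _ => hg1 i) ?_
    intro i _ j _ hij
    by_contra hne
    exact hd i j hne (hg2 i) (hij ▸ hg2 j)
  simpa using this

theorem le_fintypeCard {Adj : V → V → Prop} {A B : Set V} {k : ℕ} [Fintype V]
    (h : HasDisjointPaths Adj A B k) : k ≤ Fintype.card V := by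
  obtain ⟨f, hf, hd⟩ := h
  have hne : ∀ i, f i ≠ [] := fun i => (hf i).1
  have : Function.Injective (fun i => (f i).head (hne i)) := by
    intro i j hij
    by_contra hne'
    refine hd i j hne' (a := (f i).head (hne i)) (List.head_mem _) ?_
    rw [show (f i).head (hne i) = (f j).head (hne j) from hij]
    exact List.head_mem _
  simpa using Fintype.card_le_of_injective _ this

theorem bddAbove_setOf [Fintype V] (Adj : V → V → Prop) (A B : Set V) :
    BddAbove {k | HasDisjointPaths Adj A B k} :=
  ⟨Fintype.card V, fun _ hk => le_fintypeCard hk⟩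

theorem maxDisjointPaths_spec [Fintype V] (Adj : V → V → Prop) (A B : Set V) :
    HasDisjointPaths Adj A B (maxDisjointPaths Adj A B) :=
  Nat.sSup_mem (s := {k | HasDisjointPaths Adj A B k})
    ⟨0, hasDisjointPaths_zero Adj A B⟩ (bddAbove_setOf Adj A B)

theorem le_maxDisjointPaths [Fintype V] {Adj : V → V → Prop} {A B : Set V} {k : ℕ}
    (h : HasDisjointPaths Adj A B k) : k ≤ maxDisjointPaths Adj A B :=
  le_csSup (bddAbove_setOf Adj A B) h

theorem maxDisjointPaths_le [Fintype V] {Adj : V → V → Prop} {A B : Set V} {n : ℕ}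
    (h : ∀ k, HasDisjointPaths Adj A B k → k ≤ n) : maxDisjointPaths Adj A B ≤ n :=
  csSup_le (s := {k | HasDisjointPaths Adj A B k})
    ⟨0, hasDisjointPaths_zero Adj A B⟩ h


open Classical in
noncomputable def firstCut (S : Set V) : List V → List V
  | [] => []
  | x :: xs => if x ∈ S then [x] else x :: firstCut S xs

theorem firstCut_prefix (S : Set V) : ∀ l : List V, firstCut S l <+: l
  | [] => by simp [firstCut]
  | x :: xs => by
    by_cases hx : x ∈ S
    · simp [firstCut, hx]
    · have := firstCut_prefix S xs
      obtain ⟨t, ht⟩ := this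
      exact ⟨t, by simp [firstCut, hx, ht]⟩

theorem firstCut_cons (S : Set V) (x : V) (xs : List V) :
    ∃ t, firstCut S (x :: xs) = x :: t := by
  by_cases hx : x ∈ S
  · exact ⟨[], by simp [firstCut, hx]⟩
  · exact ⟨firstCut S xs, by simp [firstCut, hx]⟩

theorem firstCut_ne_nil {S : Set V} {l : List V} (h : l ≠ []) : firstCut S l ≠ [] := by
  obtain ⟨x, xs, rfl⟩ := List.exists_cons_of_ne_nil h
  obtain ⟨t, ht⟩ := firstCut_cons S x xs
  simp [ht]

theorem firstCut_head {S : Set V} {l : List V} (h : l ≠ []) :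
    (firstCut S l).head (firstCut_ne_nil h) = l.head h := by
  obtain ⟨x, xs, rfl⟩ := List.exists_cons_of_ne_nil h
  obtain ⟨t, ht⟩ := firstCut_cons S x xs
  simp [ht]

theorem firstCut_getLast_mem (S : Set V) :
    ∀ l : List V, (∃ y ∈ l, y ∈ S) → ∀ h : firstCut S l ≠ [],
      (firstCut S l).getLast h ∈ S
  | [], h => by simp at h
  | x :: xs, hex => by
    intro h
    by_cases hx : x ∈ S
    · simp [firstCut, hx]
    · have hxs : ∃ y ∈ xs, y ∈ S := by
        obtain ⟨y, hy1, hy2⟩ := hex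
        rcases List.mem_cons.mp hy1 with rfl | hy1
        · exact absurd hy2 hx
        · exact ⟨y, hy1, hy2⟩
      have hfc : firstCut S (x :: xs) = x :: firstCut S xs := by simp [firstCut, hx]
      have hxs_ne : firstCut S xs ≠ [] := by
        obtain ⟨y, hy1, _⟩ := hxs
        exact firstCut_ne_nil (List.ne_nil_of_mem hy1)
      rw [List.getLast_congr _ (by simp) hfc, List.getLast_cons hxs_ne]
      exact firstCut_getLast_mem S xs hxs hxs_ne

theorem firstCut_dropLast (S : Set V) :
    ∀ l : List V, ∀ y ∈ (firstCut S l).dropLast, y ∉ S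
  | [] => by simp [firstCut]
  | x :: xs => by
    by_cases hx : x ∈ S
    · simp [firstCut, hx]
    · intro y hy
      have hfc : firstCut S (x :: xs) = x :: firstCut S xs := by simp [firstCut, hx]
      rw [hfc] at hy
      rcases List.eq_nil_or_concat (firstCut S xs) with hnil | ⟨t, a, hta⟩
      · simp [hnil] at hy
      · rw [hta, ← List.concat_cons, List.concat_eq_append,
          List.dropLast_concat] at hy
        rcases List.mem_cons.mp hy with rfl | hy
        · exact hx
        · refine firstCut_dropLast S xs y ?_
          rw [hta, List.concat_eq_append, List.dropLast_concat]
          exact hy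

/-- elements of `firstCut S l` in `S` are its last element -/
theorem firstCut_mem_S {S : Set V} {l : List V} {y : V} (hy : y ∈ firstCut S l)
    (hyS : y ∈ S) (h : firstCut S l ≠ []) : y = (firstCut S l).getLast h := by
  have := List.dropLast_append_getLast h
  rw [← this] at hy
  rcases List.mem_append.mp hy with hy | hy
  · exact absurd hyS (firstCut_dropLast S l y hy)
  · simpa using hy

theorem tail_reverse_eq (l : List V) : l.reverse.tail = l.dropLast.reverse := by
  rcases List.eq_nil_or_concat l with rfl | ⟨t, a, rfl⟩
  · simp
  · simp

noncomputable def lastCut (S : Set V) (l : List V) : List V :=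
  (firstCut S l.reverse).reverse

theorem lastCut_suffix (S : Set V) (l : List V) : lastCut S l <:+ l := by
  have h := firstCut_prefix S l.reverse
  exact List.reverse_prefix.mp (by simpa [lastCut] using h)

theorem lastCut_ne_nil {S : Set V} {l : List V} (h : l ≠ []) : lastCut S l ≠ [] := by
  simp only [lastCut, ne_eq, List.reverse_eq_nil_iff]
  exact firstCut_ne_nil (by simpa)

theorem lastCut_getLast {S : Set V} {l : List V} (h : l ≠ []) :
    (lastCut S l).getLast (lastCut_ne_nil h) = l.getLast h := by
  have h1 : l.reverse ≠ [] := by simpa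
  simp only [lastCut, List.getLast_reverse]
  rw [firstCut_head h1, List.head_reverse]

theorem lastCut_head_mem {S : Set V} {l : List V} (hex : ∃ y ∈ l, y ∈ S) (h : l ≠ []) :
    (lastCut S l).head (lastCut_ne_nil h) ∈ S := by
  have h1 : l.reverse ≠ [] := by simpa
  have hex' : ∃ y ∈ l.reverse, y ∈ S := by simpa using hex
  have hne := firstCut_ne_nil (S := S) h1
  simp only [lastCut, List.head_reverse]
  exact firstCut_getLast_mem S l.reverse hex' hne

theorem lastCut_tail (S : Set V) (l : List V) : ∀ y ∈ (lastCut S l).tail, y ∉ S := by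
  intro y hy
  rw [show lastCut S l = (firstCut S l.reverse).reverse from rfl,
    tail_reverse_eq] at hy
  rw [List.mem_reverse] at hy
  exact firstCut_dropLast S l.reverse y hy

theorem lastCut_mem_S {S : Set V} {l : List V} {y : V} (hy : y ∈ lastCut S l)
    (hyS : y ∈ S) (h : lastCut S l ≠ []) : y = (lastCut S l).head h := by
  rcases List.exists_cons_of_ne_nil h with ⟨a, t, ha⟩
  have hhead : (lastCut S l).head h = a := by
    have h2 : (lastCut S l).head? = some a := by rw [ha]; rfl
    have h3 := (List.head?_eq_head h).symm.trans h2
    simpa using h3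
  rw [ha] at hy
  rcases List.mem_cons.mp hy with rfl | hy
  · exact hhead.symm
  · refine absurd hyS (lastCut_tail S l y ?_)
    have htail : (lastCut S l).tail = t := by rw [ha]; rfl
    rw [htail]; exact hy

theorem chain'_and_of_dropLast {R : V → V → Prop} {Q : V → Prop} :
    ∀ {l : List V}, l.Chain' R → (∀ a ∈ l.dropLast, Q a) →
      l.Chain' (fun a b => R a b ∧ Q a)
  | [], _, _ => List.isChain_nil
  | [x], _, _ => List.isChain_singleton x
  | x :: y :: t, hc, hq => by
    simp only [List.Chain'] at hc ⊢; rw [List.isChain_cons_cons] at hc ⊢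
    refine ⟨⟨hc.1, hq x (by simp)⟩, ?_⟩
    exact chain'_and_of_dropLast hc.2 (fun a ha => hq a (by
      rw [show (x :: y :: t).dropLast = x :: (y :: t).dropLast from rfl]
      exact List.mem_cons_of_mem x ha))

theorem getLast_suffix' {q l : List V} (h : q <:+ l) (hq : q ≠ []) (hl : l ≠ []) :
    l.getLast hl = q.getLast hq := by
  obtain ⟨r, rfl⟩ := h
  rw [List.getLast_append, dif_neg (by simp [hq])]

theorem head_prefix' {p l : List V} (h : p <+: l) (hp : p ≠ []) (hl : l ≠ []) :
    l.head hl = p.head hp := by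
  obtain ⟨r, rfl⟩ := h
  rw [List.head_append, dif_neg (by simp [hp])]

theorem exists_path_of_walk {Adj : V → V → Prop} :
    ∀ n (l : List V), l.length ≤ n → l ≠ [] → l.Chain' Adj →
      ∃ m : List V, m ≠ [] ∧ m.Chain' Adj ∧ m.Nodup ∧
        (∀ hm : m ≠ [], ∀ hl : l ≠ [], m.head hm = l.head hl ∧
          m.getLast hm = l.getLast hl) ∧ ∀ x ∈ m, x ∈ l := by
  intro n
  induction n with
  | zero => intro l hl hne _; simp [List.length_eq_zero_iff.mp (Nat.le_zero.mp hl)] at hne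
  | succ n ih =>
    rintro l hlen hne hc
    obtain ⟨x, xs, rfl⟩ := List.exists_cons_of_ne_nil hne
    by_cases hx : x ∈ xs
    · obtain ⟨s, t, hst⟩ := List.append_of_mem hx
      have hsuff : (x :: t) <:+ (x :: xs) := by
        refine ⟨x :: s, ?_⟩
        rw [hst]; simp
      have hlen' : (x :: t).length ≤ n := by
        have h0 : (x :: xs).length = s.length + (x :: t).length + 1 := by
          rw [hst]
          simp only [List.length_cons, List.length_append]
        omega
      obtain ⟨m, hm1, hm2, hm3, hm4, hm5⟩ :=
        ih (x :: t) hlen' (by simp) (hc.suffix hsuff)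
      refine ⟨m, hm1, hm2, hm3, fun hm hl => ?_, fun y hy => hsuff.subset (hm5 y hy)⟩
      obtain ⟨he1, he2⟩ := hm4 hm (by simp)
      refine ⟨by rw [he1]; rfl, ?_⟩
      rw [he2, getLast_suffix' hsuff (by simp) hl]
    · rcases xs with _ | ⟨y, ys⟩
      · exact ⟨[x], by simp, List.isChain_singleton x, by simp, by simp, by simp⟩
      · have hlen' : (y :: ys).length ≤ n := by simp at hlen ⊢; omega
        obtain ⟨m, hm1, hm2, hm3, hm4, hm5⟩ :=
          ih (y :: ys) hlen' (by simp) (List.isChain_cons_cons.mp hc).2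
        refine ⟨x :: m, by simp, ?_, ?_, fun hm hl => ?_, ?_⟩
        · simp only [List.Chain']; rw [List.isChain_cons]
          refine ⟨fun z hz => ?_, hm2⟩
          have h9 : m.head? = some ((y :: ys).head (by simp)) := by
            rw [List.head?_eq_head hm1, (hm4 hm1 (by simp)).1]
          rw [h9] at hz
          have hzy : y = z := by simpa using hz
          rw [← hzy]
          exact (List.isChain_cons_cons.mp hc).1
        · exact List.nodup_cons.mpr ⟨fun hmem => hx (hm5 x hmem), hm3⟩
        · refine ⟨rfl, ?_⟩
          rw [List.getLast_cons hm1, (hm4 hm1 (by simp)).2,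
            List.getLast_cons (by simp : (y :: ys) ≠ [])]
        · intro z hz
          rcases List.mem_cons.mp hz with rfl | hz
          · simp
          · exact List.mem_cons_of_mem x (hm5 z hz)

theorem prefix_eq_of_getLast_mem {l p : List V} (hp : p <+: l) (hn : l.Nodup)
    (h : l ≠ []) (hm : l.getLast h ∈ p) : p = l := by
  obtain ⟨r, rfl⟩ := hp
  rcases List.eq_nil_or_concat r with rfl | ⟨r', a, rfl⟩
  · simp
  · exfalso
    have hglast : (p ++ r'.concat a).getLast h = a := by
      rw [getLast_suffix' (q := [a]) (l := p ++ r'.concat a) ⟨p ++ r', by simp⟩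
        (by simp) h]
      rfl
    rw [hglast] at hm
    have hdisj := (List.nodup_append'.mp hn).2.2
    exact hdisj hm (by simp)

theorem not_head_mem_suffix_tail {l q : List V} (hq : q <:+ l) (hn : l.Nodup)
    (hl : l ≠ []) (h : l.head hl ∈ q.tail) : False := by
  obtain ⟨r, rfl⟩ := hq
  rcases r with _ | ⟨a, r'⟩
  · simp only [List.nil_append] at hn hl h
    have := List.cons_head_tail hl
    rw [← this] at hn
    exact (List.nodup_cons.mp hn).1 h
  · have hhead : ((a :: r') ++ q).head hl = a := by rfl
    rw [hhead] at h
    have hdisj := (List.nodup_append'.mp hn).2.2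
    exact hdisj (by simp) (List.mem_of_mem_tail h)

theorem isDiPath_firstCut {Adj : V → V → Prop} {A B S : Set V} {l : List V}
    (h : IsDiPath Adj A B l) (hex : ∃ y ∈ l, y ∈ S) :
    IsDiPath Adj A S (firstCut S l) := by
  obtain ⟨h1, h2, h3, h4⟩ := h
  have hpre := firstCut_prefix S l
  have hne : firstCut S l ≠ [] := firstCut_ne_nil h1
  refine ⟨hne, h2.prefix hpre, h3.sublist hpre.sublist, fun hh => ?_⟩
  constructor
  · rw [show (firstCut S l).head hh = l.head h1 from (head_prefix' hpre hh h1).symm]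
    exact (h4 h1).1
  · exact firstCut_getLast_mem S l hex hh

theorem isDiPath_lastCut {Adj : V → V → Prop} {A B S : Set V} {l : List V}
    (h : IsDiPath Adj A B l) (hex : ∃ y ∈ l, y ∈ S) :
    IsDiPath Adj S B (lastCut S l) := by
  obtain ⟨h1, h2, h3, h4⟩ := h
  have hsuf := lastCut_suffix S l
  have hne : lastCut S l ≠ [] := lastCut_ne_nil h1
  refine ⟨hne, h2.suffix hsuf, h3.sublist hsuf.sublist, fun hh => ?_⟩
  constructor
  · exact lastCut_head_mem hex h1
  · rw [lastCut_getLast h1]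
    exact (h4 h1).2

/-- truncated disjoint path family -/
theorem hasDisjointPaths_firstCut {Adj : V → V → Prop} {A B S : Set V} {k : ℕ}
    (h : HasDisjointPaths Adj A B k) (hS : ∀ l, IsDiPath Adj A B l → ∃ y ∈ l, y ∈ S) :
    HasDisjointPaths Adj A S k := by
  obtain ⟨f, hf, hd⟩ := h
  refine ⟨fun i => firstCut S (f i), fun i => isDiPath_firstCut (hf i) (hS _ (hf i)), ?_⟩
  intro i j hij x hx hx'
  exact hd i j hij ((firstCut_prefix S (f i)).subset hx)
    ((firstCut_prefix S (f j)).subset hx')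

theorem hasDisjointPaths_lastCut {Adj : V → V → Prop} {A B S : Set V} {k : ℕ}
    (h : HasDisjointPaths Adj A B k) (hS : ∀ l, IsDiPath Adj A B l → ∃ y ∈ l, y ∈ S) :
    HasDisjointPaths Adj S B k := by
  obtain ⟨f, hf, hd⟩ := h
  refine ⟨fun i => lastCut S (f i), fun i => isDiPath_lastCut (hf i) (hS _ (hf i)), ?_⟩
  intro i j hij x hx hx'
  exact hd i j hij ((lastCut_suffix S (f i)).subset hx)
    ((lastCut_suffix S (f j)).subset hx')

theorem chain'_and_of_tail {R : V → V → Prop} {Q : V → Prop} :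
    ∀ {l : List V}, l.Chain' R → (∀ b ∈ l.tail, Q b) →
      l.Chain' (fun a b => R a b ∧ Q b)
  | [], _, _ => List.isChain_nil
  | [x], _, _ => List.isChain_singleton x
  | x :: y :: t, hc, hq => by
    simp only [List.Chain'] at hc ⊢; rw [List.isChain_cons_cons] at hc ⊢
    refine ⟨⟨hc.1, hq y (by simp)⟩, ?_⟩
    exact chain'_and_of_tail hc.2 (fun b hb => hq b (List.mem_cons_of_mem _ hb))

theorem mem_of_not_chain' {R R' : V → V → Prop} {u v : V}
    (h : ∀ a b, R a b → R' a b ∨ (a = u ∧ b = v)) :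
    ∀ l : List V, l.Chain' R → ¬ l.Chain' R' → u ∈ l ∧ v ∈ l
  | [], _, hc' => absurd List.isChain_nil hc'
  | [x], _, hc' => absurd (List.isChain_singleton x) hc'
  | x :: y :: t, hc, hc' => by
    simp only [List.Chain'] at hc hc'; rw [List.isChain_cons_cons] at hc hc'
    push_neg at hc'
    by_cases hxy : R' x y
    · have := mem_of_not_chain' h (y :: t) hc.2 (hc' hxy)
      exact ⟨List.mem_cons_of_mem _ this.1, List.mem_cons_of_mem _ this.2⟩
    · rcases h x y hc.1 with h' | ⟨rfl, rfl⟩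
      · exact absurd h' hxy
      · exact ⟨by simp, by simp⟩

theorem isDiPath_mono_right {Adj : V → V → Prop} {A B B' : Set V} {l : List V}
    (h : IsDiPath Adj A B l) (hB : B ⊆ B') : IsDiPath Adj A B' l :=
  ⟨h.1, h.2.1, h.2.2.1, fun hh => ⟨(h.2.2.2 hh).1, hB (h.2.2.2 hh).2⟩⟩

theorem isDiPath_mono_left {Adj : V → V → Prop} {A A' B : Set V} {l : List V}
    (h : IsDiPath Adj A B l) (hA : A ⊆ A') : IsDiPath Adj A' B l :=
  ⟨h.1, h.2.1, h.2.2.1, fun hh => ⟨hA (h.2.2.2 hh).1, (h.2.2.2 hh).2⟩⟩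

theorem isDiPath_mono_adj {Adj Adj' : V → V → Prop} {A B : Set V} {l : List V}
    (hAdj : ∀ a b, Adj' a b → Adj a b) (h : IsDiPath Adj' A B l) : IsDiPath Adj A B l :=
  ⟨h.1, h.2.1.imp hAdj, h.2.2.1, h.2.2.2⟩

theorem univ_disconnecting [Fintype V] (Adj : V → V → Prop) (A B : Set V) :
    IsDisconnecting Adj A B ↑(Finset.univ : Finset V) := by
  intro l hl
  obtain ⟨x, xs, rfl⟩ := List.exists_cons_of_ne_nil hl.1
  exact ⟨x, by simp, by simp⟩

open Classical in
noncomputable def edgeFinset [Fintype V] (Adj : V → V → Prop) : Finset (V × V) :=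
  Finset.univ.filter (fun p => Adj p.1 p.2 ∧ p.1 ≠ p.2)

theorem menger_noedges [Fintype V] (Adj : V → V → Prop)
    (hA : ∀ a b, Adj a b → a = b) (A B : Set V) :
    ∃ W : Finset V, IsDisconnecting Adj A B ↑W ∧ HasDisjointPaths Adj A B W.card := by
  classical
  refine ⟨Finset.univ.filter (fun v => v ∈ A ∧ v ∈ B), ?_, ?_⟩
  · intro l hl
    obtain ⟨hne, hch, hnd, hab⟩ := hl
    obtain ⟨x, xs, rfl⟩ := List.exists_cons_of_ne_nil hne
    rcases xs with _ | ⟨y, t⟩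
    · obtain ⟨h1, h2⟩ := hab (by simp)
      exact ⟨x, by simpa using ⟨h1, h2⟩, by simp⟩
    · exfalso
      have hxy := (List.isChain_cons_cons.mp hch).1
      have := hA x y hxy
      subst this
      simp at hnd
  · set W := Finset.univ.filter (fun v => v ∈ A ∧ v ∈ B) with hW
    refine ⟨fun i => [(W.equivFin.symm i : V)], fun i => ?_, ?_⟩
    · have hmem := (W.equivFin.symm i).2
      have hmem' : (W.equivFin.symm i : V) ∈ A ∧ (W.equivFin.symm i : V) ∈ B := by
        have := Finset.mem_filter.mp hmem
        exact this.2
      exact ⟨by simp, List.isChain_singleton _, by simp, fun h => ⟨hmem'.1, hmem'.2⟩⟩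
    · intro i j hij x hx hx'
      simp only [List.mem_singleton] at hx hx'
      apply hij
      have : W.equivFin.symm i = W.equivFin.symm j := Subtype.ext (by rw [← hx, ← hx'])
      exact W.equivFin.symm.injective this

theorem menger [Fintype V] :
    ∀ (n : ℕ) (Adj : V → V → Prop), (edgeFinset Adj).card ≤ n → ∀ (A B : Set V),
      ∃ W : Finset V, IsDisconnecting Adj A B ↑W ∧ HasDisjointPaths Adj A B W.card := by
  classical
  intro n
  induction n with
  | zero =>
    intro Adj hcard A B
    refine menger_noedges Adj (fun a b hab => ?_) A B
    by_contra hne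
    have : (a, b) ∈ edgeFinset Adj := by
      simp only [edgeFinset, Finset.mem_filter, Finset.mem_univ, true_and]
      exact ⟨hab, hne⟩
    have := Finset.card_pos.mpr ⟨_, this⟩
    omega
  | succ n ih =>
    intro Adj hcard A B
    rcases Finset.eq_empty_or_nonempty (edgeFinset Adj) with hE | ⟨⟨u, v⟩, he⟩
    · refine menger_noedges Adj (fun a b hab => ?_) A B
      by_contra hne
      have : (a, b) ∈ edgeFinset Adj := by
        simp only [edgeFinset, Finset.mem_filter, Finset.mem_univ, true_and]
        exact ⟨hab, hne⟩
      simp [hE] at this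
    · simp only [edgeFinset, Finset.mem_filter, Finset.mem_univ, true_and] at he
      obtain ⟨huv, hune⟩ := he
      set Adj' : V → V → Prop := fun a b => Adj a b ∧ ¬(a = u ∧ b = v) with hAdj'def
      have hAdj' : ∀ a b, Adj' a b → Adj a b := fun a b h => h.1
      have hcase : ∀ a b, Adj a b → Adj' a b ∨ (a = u ∧ b = v) := by
        intro a b hab
        by_cases h : a = u ∧ b = v
        · exact Or.inr h
        · exact Or.inl ⟨hab, h⟩
      have hE' : (edgeFinset Adj').card ≤ n := by
        have hsub : edgeFinset Adj' ⊆ (edgeFinset Adj).erase (u, v) := by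
          intro p hp
          simp only [edgeFinset, Finset.mem_filter, Finset.mem_univ, true_and] at hp
          rw [Finset.mem_erase]
          constructor
          · rintro rfl
            exact hp.1.2 ⟨rfl, rfl⟩
          · simp only [edgeFinset, Finset.mem_filter, Finset.mem_univ, true_and]
            exact ⟨hp.1.1, hp.2⟩
        have h5 := Finset.card_le_card hsub
        have h6 : (u, v) ∈ edgeFinset Adj := by
          simp only [edgeFinset, Finset.mem_filter, Finset.mem_univ, true_and]
          exact ⟨huv, hune⟩
        have hcard' := Finset.card_erase_of_mem h6
        omega
      -- minimum separator size k
      set sepSizes := {m | ∃ D : Finset V, IsDisconnecting Adj A B ↑D ∧ D.card = m}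
        with hsepSizes
      have hsepNe : sepSizes.Nonempty :=
        ⟨(Finset.univ : Finset V).card, Finset.univ, univ_disconnecting Adj A B, rfl⟩
      set k := sInf sepSizes with hk
      obtain ⟨D0, hD0dis, hD0card⟩ : ∃ D : Finset V,
          IsDisconnecting Adj A B ↑D ∧ D.card = k := Nat.sInf_mem hsepNe
      have hmin : ∀ D : Finset V, IsDisconnecting Adj A B ↑D → k ≤ D.card :=
        fun D h => Nat.sInf_le ⟨D, h, rfl⟩
      by_cases hsep : ∀ T : Finset V, IsDisconnecting Adj' A B ↑T → k ≤ T.card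
      · obtain ⟨W', hW1, hW2⟩ := ih Adj' hE' A B
        refine ⟨D0, hD0dis, ?_⟩
        rw [hD0card]
        exact hasDisjointPaths_mono_adj hAdj'
          (hasDisjointPaths_mono_nat hW2 (hsep W' hW1))
      · push_neg at hsep
        obtain ⟨S, hSdis, hScard⟩ := hsep
        -- S ∪ {u} and S ∪ {v} are A-B separators in Adj
        have hSuB : IsDisconnecting Adj A B ↑(insert u S) := by
          intro l hl
          by_cases hch : l.Chain' Adj'
          · obtain ⟨s, hs1, hs2⟩ := hSdis l ⟨hl.1, hch, hl.2.2.1, hl.2.2.2⟩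
            exact ⟨s, by simpa using Or.inr (by simpa using hs1), hs2⟩
          · obtain ⟨hu, _⟩ := mem_of_not_chain' hcase l hl.2.1 hch
            exact ⟨u, by simp, hu⟩
        have hSvB : IsDisconnecting Adj A B ↑(insert v S) := by
          intro l hl
          by_cases hch : l.Chain' Adj'
          · obtain ⟨s, hs1, hs2⟩ := hSdis l ⟨hl.1, hch, hl.2.2.1, hl.2.2.2⟩
            exact ⟨s, by simpa using Or.inr (by simpa using hs1), hs2⟩
          · obtain ⟨_, hv⟩ := mem_of_not_chain' hcase l hl.2.1 hch
            exact ⟨v, by simp, hv⟩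
        have huS : u ∉ S := by
          intro hu
          have := hmin _ hSuB
          rw [Finset.insert_eq_self.mpr hu] at this
          omega
        have hvS : v ∉ S := by
          intro hv
          have := hmin _ hSvB
          rw [Finset.insert_eq_self.mpr hv] at this
          omega
        have hcardu : (insert u S).card = k := by
          have h1 := hmin _ hSuB
          have h2 := Finset.card_insert_le u S
          omega
        have hcardv : (insert v S).card = k := by
          have h1 := hmin _ hSvB
          have h2 := Finset.card_insert_le v S
          omega
        -- every Adj'-(A, insert u S) separator has size ≥ k
        have hTleft : ∀ T : Finset V,
            IsDisconnecting Adj' A ↑(insert u S) ↑T → k ≤ T.card := by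
          intro T hT
          refine hmin T ?_
          intro l hl
          by_cases hch : l.Chain' Adj'
          · have hl' : IsDiPath Adj' A B l := ⟨hl.1, hch, hl.2.2.1, hl.2.2.2⟩
            have hexS : ∃ y ∈ l, y ∈ (↑S : Set V) := by
              obtain ⟨s, hs1, hs2⟩ := hSdis l hl'
              exact ⟨s, hs2, hs1⟩
            have hp : IsDiPath Adj' A ↑(insert u S) (firstCut (↑S) l) :=
              isDiPath_mono_right (isDiPath_firstCut hl' hexS)
                (by intro x hx; simp only [Finset.coe_insert]; exact Set.mem_insert_of_mem _ hx)
            obtain ⟨w, hw1, hw2⟩ := hT _ hp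
            exact ⟨w, hw1, (firstCut_prefix (↑S) l).subset hw2⟩
          · obtain ⟨hu, _⟩ := mem_of_not_chain' hcase l hl.2.1 hch
            have hexu : ∃ y ∈ l, y ∈ ({u} : Set V) := ⟨u, hu, rfl⟩
            have hp0 : IsDiPath Adj A ({u} : Set V) (firstCut {u} l) :=
              isDiPath_firstCut hl hexu
            have hch' : (firstCut ({u} : Set V) l).Chain' Adj' := by
              have hdl : ∀ a ∈ (firstCut ({u} : Set V) l).dropLast, a ≠ u := by
                intro a ha
                have := firstCut_dropLast ({u} : Set V) l a ha
                simpa using this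
              have := chain'_and_of_dropLast hp0.2.1 hdl
              refine this.imp ?_
              rintro a b ⟨hab, hau⟩
              exact ⟨hab, fun h => hau h.1⟩
            have hp : IsDiPath Adj' A ↑(insert u S) (firstCut ({u} : Set V) l) := by
              refine ⟨hp0.1, hch', hp0.2.2.1, fun hh => ⟨(hp0.2.2.2 hh).1, ?_⟩⟩
              have := (hp0.2.2.2 hh).2
              simp only [Set.mem_singleton_iff] at this
              rw [this]
              simp
            obtain ⟨w, hw1, hw2⟩ := hT _ hp
            exact ⟨w, hw1, (firstCut_prefix _ l).subset hw2⟩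
        have hTright : ∀ T : Finset V,
            IsDisconnecting Adj' ↑(insert v S) B ↑T → k ≤ T.card := by
          intro T hT
          refine hmin T ?_
          intro l hl
          by_cases hch : l.Chain' Adj'
          · have hl' : IsDiPath Adj' A B l := ⟨hl.1, hch, hl.2.2.1, hl.2.2.2⟩
            have hexS : ∃ y ∈ l, y ∈ (↑S : Set V) := by
              obtain ⟨s, hs1, hs2⟩ := hSdis l hl'
              exact ⟨s, hs2, hs1⟩
            have hp : IsDiPath Adj' ↑(insert v S) B (lastCut (↑S) l) :=
              isDiPath_mono_left (isDiPath_lastCut hl' hexS)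
                (by intro x hx; simp only [Finset.coe_insert]; exact Set.mem_insert_of_mem _ hx)
            obtain ⟨w, hw1, hw2⟩ := hT _ hp
            exact ⟨w, hw1, (lastCut_suffix (↑S) l).subset hw2⟩
          · obtain ⟨_, hv⟩ := mem_of_not_chain' hcase l hl.2.1 hch
            have hexv : ∃ y ∈ l, y ∈ ({v} : Set V) := ⟨v, hv, rfl⟩
            have hp0 : IsDiPath Adj ({v} : Set V) B (lastCut {v} l) :=
              isDiPath_lastCut hl hexv
            have hch' : (lastCut ({v} : Set V) l).Chain' Adj' := by
              have hdl : ∀ b ∈ (lastCut ({v} : Set V) l).tail, b ≠ v := by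
                intro b hb
                have := lastCut_tail ({v} : Set V) l b hb
                simpa using this
              have := chain'_and_of_tail hp0.2.1 hdl
              refine this.imp ?_
              rintro a b ⟨hab, hbv⟩
              exact ⟨hab, fun h => hbv h.2⟩
            have hp : IsDiPath Adj' ↑(insert v S) B (lastCut ({v} : Set V) l) := by
              refine ⟨hp0.1, hch', hp0.2.2.1, fun hh => ⟨?_, (hp0.2.2.2 hh).2⟩⟩
              have := (hp0.2.2.2 hh).1
              simp only [Set.mem_singleton_iff] at this
              rw [this]
              simp
            obtain ⟨w, hw1, hw2⟩ := hT _ hp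
            exact ⟨w, hw1, (lastCut_suffix _ l).subset hw2⟩
        obtain ⟨W₁, hW₁dis, hW₁paths⟩ := ih Adj' hE' A ↑(insert u S)
        obtain ⟨W₂, hW₂dis, hW₂paths⟩ := ih Adj' hE' ↑(insert v S) B
        have hLeft : HasDisjointPaths Adj' A ↑(insert u S) k :=
          hasDisjointPaths_mono_nat hW₁paths (hTleft W₁ hW₁dis)
        have hRight : HasDisjointPaths Adj' ↑(insert v S) B k :=
          hasDisjointPaths_mono_nat hW₂paths (hTright W₂ hW₂dis)
        -- glue
        have hglue : HasDisjointPaths Adj A B k := by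
          obtain ⟨P0, hP0, hP0d⟩ := hLeft
          obtain ⟨Q0, hQ0, hQ0d⟩ := hRight
          set tU : Set V := ↑(insert u S) with htU
          set tV : Set V := ↑(insert v S) with htV
          have hP0ex : ∀ i, ∃ y ∈ P0 i, y ∈ tU := fun i =>
            ⟨_, List.getLast_mem (hP0 i).1, ((hP0 i).2.2.2 (hP0 i).1).2⟩
          have hQ0ex : ∀ j, ∃ y ∈ Q0 j, y ∈ tV := fun j =>
            ⟨_, List.head_mem (hQ0 j).1, ((hQ0 j).2.2.2 (hQ0 j).1).1⟩
          set P : Fin k → List V := fun i => firstCut tU (P0 i) with hPdef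
          set Q : Fin k → List V := fun j => lastCut tV (Q0 j) with hQdef
          have hP : ∀ i, IsDiPath Adj' A tU (P i) := fun i =>
            isDiPath_firstCut (hP0 i) (hP0ex i)
          have hQ : ∀ j, IsDiPath Adj' tV B (Q j) := fun j =>
            isDiPath_lastCut (hQ0 j) (hQ0ex j)
          have hPne : ∀ i, P i ≠ [] := fun i => (hP i).1
          have hQne : ∀ j, Q j ≠ [] := fun j => (hQ j).1
          have hPd : ∀ i j, i ≠ j → (P i).Disjoint (P j) := by
            intro i j hij x hx hx'
            exact hP0d i j hij ((firstCut_prefix tU (P0 i)).subset hx)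
              ((firstCut_prefix tU (P0 j)).subset hx')
          have hQd : ∀ i j, i ≠ j → (Q i).Disjoint (Q j) := by
            intro i j hij x hx hx'
            exact hQ0d i j hij ((lastCut_suffix tV (Q0 i)).subset hx)
              ((lastCut_suffix tV (Q0 j)).subset hx')
          have hPonly : ∀ i, ∀ y ∈ P i, y ∈ tU → y = (P i).getLast (hPne i) :=
            fun i y hy hyS => firstCut_mem_S hy hyS (hPne i)
          have hQonly : ∀ j, ∀ y ∈ Q j, y ∈ tV → y = (Q j).head (hQne j) :=
            fun j y hy hyS => lastCut_mem_S hy hyS (hQne j)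
          set eP : Fin k → V := fun i => (P i).getLast (hPne i) with hePdef
          set eQ : Fin k → V := fun j => (Q j).head (hQne j) with heQdef
          have hePmem : ∀ i, eP i ∈ insert u S := fun i => by
            have := ((hP i).2.2.2 (hPne i)).2
            simpa [htU] using this
          have heQmem : ∀ j, eQ j ∈ insert v S := fun j => by
            have := ((hQ j).2.2.2 (hQne j)).1
            simpa [htV] using this
          have hePinj : Function.Injective eP := by
            intro i j hij
            by_contra hne
            exact hPd i j hne (List.getLast_mem (hPne i))
              (by rw [show (P i).getLast (hPne i) = (P j).getLast (hPne j) from hij]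
                  exact List.getLast_mem (hPne j))
          have heQinj : Function.Injective eQ := by
            intro i j hij
            by_contra hne
            exact hQd i j hne (List.head_mem (hQne i))
              (by rw [show (Q i).head (hQne i) = (Q j).head (hQne j) from hij]
                  exact List.head_mem (hQne j))
          have hkpos : 0 < k := Nat.pos_of_ne_zero (fun h => by omega)
          have hePsurj : ∀ s ∈ insert u S, ∃ i, eP i = s := by
            intro s hs
            have himg : Finset.image eP Finset.univ = insert u S := by
              apply Finset.eq_of_subset_of_card_le
              · intro x hx
                obtain ⟨i, _, rfl⟩ := Finset.mem_image.mp hx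
                exact hePmem i
              · rw [Finset.card_image_of_injective _ hePinj, Finset.card_univ,
                  Fintype.card_fin, hcardu]
            have : s ∈ Finset.image eP Finset.univ := by rw [himg]; exact hs
            obtain ⟨i, _, hi⟩ := Finset.mem_image.mp this
            exact ⟨i, hi⟩
          have heQsurj : ∀ s ∈ insert v S, ∃ j, eQ j = s := by
            intro s hs
            have himg : Finset.image eQ Finset.univ = insert v S := by
              apply Finset.eq_of_subset_of_card_le
              · intro x hx
                obtain ⟨j, _, rfl⟩ := Finset.mem_image.mp hx
                exact heQmem j
              · rw [Finset.card_image_of_injective _ heQinj, Finset.card_univ,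
                  Fintype.card_fin, hcardv]
            have : s ∈ Finset.image eQ Finset.univ := by rw [himg]; exact hs
            obtain ⟨j, _, hj⟩ := Finset.mem_image.mp this
            exact ⟨j, hj⟩
          have hchoiceP : ∀ s : V, ∃ i : Fin k, s ∈ insert u S → eP i = s := by
            intro s
            by_cases hs : s ∈ insert u S
            · obtain ⟨i, hi⟩ := hePsurj s hs
              exact ⟨i, fun _ => hi⟩
            · exact ⟨⟨0, hkpos⟩, fun h => absurd h hs⟩
          have hchoiceQ : ∀ s : V, ∃ j : Fin k, s ∈ insert v S → eQ j = s := by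
            intro s
            by_cases hs : s ∈ insert v S
            · obtain ⟨j, hj⟩ := heQsurj s hs
              exact ⟨j, fun _ => hj⟩
            · exact ⟨⟨0, hkpos⟩, fun h => absurd h hs⟩
          choose iP hiP using hchoiceP
          choose jQ hjQ using hchoiceQ
          -- cross-disjointness lemma
          have hcross : ∀ i j x, x ∈ P i → x ∈ Q j →
              x ∈ (↑S : Set V) ∧ x = eP i ∧ x = eQ j := by
            intro i j x hxP hxQ
            set p1 := firstCut ({x} : Set V) (P i) with hp1def
            set q1 := lastCut ({x} : Set V) (Q j) with hq1def
            have hxPex : ∃ y ∈ P i, y ∈ ({x} : Set V) := ⟨x, hxP, rfl⟩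
            have hxQex : ∃ y ∈ Q j, y ∈ ({x} : Set V) := ⟨x, hxQ, rfl⟩
            have hp1ne : p1 ≠ [] := firstCut_ne_nil (hPne i)
            have hq1ne : q1 ≠ [] := lastCut_ne_nil (hQne j)
            have hp1last : p1.getLast hp1ne = x := by
              have := firstCut_getLast_mem ({x} : Set V) (P i) hxPex hp1ne
              simpa using this
            have hq1head : q1.head hq1ne = x := by
              have := lastCut_head_mem hxQex (hQne j)
              simpa using this
            have hp1pre : p1 <+: P i := firstCut_prefix _ _
            have hq1suf : q1 <:+ Q j := lastCut_suffix _ _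
            have hq1cons : q1 = x :: q1.tail := by
              rw [← hq1head]
              exact (List.cons_head_tail hq1ne).symm
            set w := p1 ++ q1.tail with hwdef
            have hwne : w ≠ [] := by simp [hwdef, hp1ne]
            have hq1lastB : q1.getLast hq1ne ∈ B := by
              rw [← getLast_suffix' hq1suf hq1ne (hQne j)]
              exact ((hQ j).2.2.2 (hQne j)).2
            have hwch : w.Chain' Adj' := by
              rw [hwdef]; simp only [List.Chain']; rw [List.isChain_append]
              refine ⟨(hP i).2.1.prefix hp1pre, ((hQ j).2.1.suffix hq1suf).tail, ?_⟩
              intro a ha b hb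
              have haa : a = x := by
                rw [List.getLast?_eq_getLast hp1ne] at ha
                simp only [Option.mem_def, Option.some.injEq] at ha
                rw [← ha, hp1last]
              have hq1c : q1.Chain' Adj' := (hQ j).2.1.suffix hq1suf
              rw [hq1cons] at hq1c; simp only [List.Chain'] at hq1c; rw [List.isChain_cons] at hq1c
              rw [haa]
              exact hq1c.1 b hb
            have hwheadA : w.head hwne ∈ A := by
              rw [show w.head hwne = p1.head hp1ne from
                (head_prefix' ⟨q1.tail, rfl⟩ hp1ne hwne).symm ▸ rfl]
              rw [show p1.head hp1ne = (P i).head (hPne i) from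
                (head_prefix' hp1pre hp1ne (hPne i)).symm]
              exact ((hP i).2.2.2 (hPne i)).1
            have hweq : w.getLast hwne = q1.getLast hq1ne := by
              rcases hq1t : q1.tail with _ | ⟨b, bs⟩
              · have hw? : w.getLast? = some (w.getLast hwne) :=
                  List.getLast?_eq_getLast hwne
                have hq? : q1.getLast? = some (q1.getLast hq1ne) :=
                  List.getLast?_eq_getLast hq1ne
                have hw2 : w.getLast? = some x := by
                  rw [hwdef, hq1t, List.append_nil,
                    List.getLast?_eq_getLast hp1ne, hp1last]
                have hq2 : q1.getLast? = some x := by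
                  rw [hq1cons, hq1t]
                  rfl
                rw [hw?] at hw2
                rw [hq?] at hq2
                simp only [Option.some.injEq] at hw2 hq2
                rw [hw2, hq2]
              · have hne2 : q1.tail ≠ [] := by rw [hq1t]; simp
                have hsufw : q1.tail <:+ w := ⟨p1, rfl⟩
                have hsufq : q1.tail <:+ q1 := ⟨[x], by simpa using hq1cons.symm⟩
                rw [getLast_suffix' hsufw hne2 hwne, getLast_suffix' hsufq hne2 hq1ne]
            have hwlastB : w.getLast hwne ∈ B := by
              rw [hweq]
              exact hq1lastB
            obtain ⟨m, hm1, hm2, hm3, hm4, hm5⟩ :=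
              exists_path_of_walk w.length w le_rfl hwne hwch
            have hmpath : IsDiPath Adj' A B m := by
              refine ⟨hm1, hm2, hm3, fun hh => ?_⟩
              obtain ⟨e1, e2⟩ := hm4 hh hwne
              exact ⟨e1 ▸ hwheadA, e2 ▸ hwlastB⟩
            obtain ⟨s, hsS, hsm⟩ := hSdis m hmpath
            have hsw : s ∈ w := hm5 s hsm
            rcases List.mem_append.mp hsw with hsp | hsq
            · have hsPi : s ∈ P i := hp1pre.subset hsp
              have hsU : s ∈ tU := by
                rw [htU]
                simp only [Finset.coe_insert]
                exact Set.mem_insert_of_mem _ hsS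
              have hsL : s = eP i := hPonly i s hsPi hsU
              have hPeq : p1 = P i := by
                refine prefix_eq_of_getLast_mem hp1pre (hP i).2.2.1 (hPne i) ?_
                rw [show (P i).getLast (hPne i) = s from hsL.symm]
                exact hsp
              have hx_eq : x = eP i := by
                rw [← hp1last, hePdef]
                simp only
                congr 1
              have hxS : x ∈ (↑S : Set V) := by rw [hx_eq, ← hsL]; exact hsS
              have hxV : x ∈ tV := by
                rw [htV]
                simp only [Finset.coe_insert]
                exact Set.mem_insert_of_mem _ hxS
              exact ⟨hxS, hx_eq, hQonly j x hxQ hxV⟩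
            · exfalso
              have hsQj : s ∈ Q j := hq1suf.subset (List.mem_of_mem_tail hsq)
              have hsV : s ∈ tV := by
                rw [htV]
                simp only [Finset.coe_insert]
                exact Set.mem_insert_of_mem _ hsS
              have hsH : s = (Q j).head (hQne j) := hQonly j s hsQj hsV
              refine not_head_mem_suffix_tail hq1suf (hQ j).2.2.1 (hQne j) ?_
              rw [← hsH]
              exact hsq
          set F : V → List V := fun s =>
            if s = u then P (iP u) ++ Q (jQ v) else P (iP s) ++ (Q (jQ s)).tail
            with hFdef
          set σ : V → V := fun s => if s = u then v else s with hσdef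
          have hmemv : v ∈ insert v S := Finset.mem_insert_self v S
          have hσu : σ u = v := by rw [hσdef]; simp
          have hσs : ∀ s, s ≠ u → σ s = s := by intro s hsu; rw [hσdef]; simp [hsu]
          have hσmem : ∀ s ∈ insert u S, σ s ∈ insert v S := by
            intro s hs
            by_cases hsu : s = u
            · rw [hsu, hσu]; exact hmemv
            · have hsS : s ∈ S := by
                rcases Finset.mem_insert.mp hs with h | h
                · exact absurd h hsu
                · exact h
              rw [hσs s hsu]
              exact Finset.mem_insert_of_mem hsS
          have heQσ : ∀ s ∈ insert u S, eQ (jQ (σ s)) = σ s :=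
            fun s hs => hjQ _ (hσmem s hs)
          have hFsub : ∀ s, ∀ x ∈ F s, x ∈ P (iP s) ∨ x ∈ Q (jQ (σ s)) := by
            intro s x hx
            simp only [hFdef] at hx
            by_cases hsu : s = u
            · rw [if_pos hsu] at hx
              rcases List.mem_append.mp hx with h | h
              · left; rw [hsu]; exact h
              · right; rw [hsu, hσu]; exact h
            · rw [if_neg hsu] at hx
              rcases List.mem_append.mp hx with h | h
              · left; exact h
              · right; rw [hσs s hsu]; exact List.mem_of_mem_tail h
          have hePa : ∀ i, (P i).getLast (hPne i) = eP i := fun i => rfl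
          have heQa : ∀ j, (Q j).head (hQne j) = eQ j := fun j => rfl
          have hFpath : ∀ s ∈ insert u S, IsDiPath Adj A B (F s) := by
            intro s hs
            have hPs : eP (iP s) = s := hiP s hs
            by_cases hsu : s = u
            · subst hsu
              have hQv : eQ (jQ v) = v := hjQ v hmemv
              have hFeq : F s = P (iP s) ++ Q (jQ v) := by rw [hFdef]; simp
              rw [hFeq]
              have hne : P (iP s) ++ Q (jQ v) ≠ [] := by simp [hPne]
              refine ⟨hne, ?_, ?_, fun hh => ⟨?_, ?_⟩⟩
              · simp only [List.Chain']; rw [List.isChain_append]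
                refine ⟨(hP _).2.1.imp hAdj', (hQ _).2.1.imp hAdj', ?_⟩
                intro a ha b hb
                have haa : a = s := by
                  rw [List.getLast?_eq_getLast (hPne (iP s))] at ha
                  simp only [Option.mem_def, Option.some.injEq] at ha
                  rw [← ha, hePa]; exact hPs
                have hbb : b = v := by
                  rw [List.head?_eq_head (hQne (jQ v))] at hb
                  simp only [Option.mem_def, Option.some.injEq] at hb
                  rw [← hb, heQa]; exact hQv
                rw [haa, hbb]
                exact huv
              · rw [List.nodup_append']
                refine ⟨(hP _).2.2.1, (hQ _).2.2.1, ?_⟩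
                intro x hx hx'
                obtain ⟨hxS, hxe, _⟩ := hcross _ _ x hx hx'
                rw [hxe, hPs] at hxS
                exact huS (by simpa using hxS)
              · rw [show (P (iP s) ++ Q (jQ v)).head hne = (P (iP s)).head (hPne _) from
                  head_prefix' ⟨Q (jQ v), rfl⟩ (hPne _) hne]
                exact ((hP _).2.2.2 (hPne _)).1
              · rw [show (P (iP s) ++ Q (jQ v)).getLast hne = (Q (jQ v)).getLast (hQne _)
                  from getLast_suffix' ⟨P (iP s), rfl⟩ (hQne _) hne]
                exact ((hQ _).2.2.2 (hQne _)).2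
            · have hsS : s ∈ S := by
                rcases Finset.mem_insert.mp hs with h | h
                · exact absurd h hsu
                · exact h
              have hQs : eQ (jQ s) = s := hjQ s (Finset.mem_insert_of_mem hsS)
              have hFeq : F s = P (iP s) ++ (Q (jQ s)).tail := by rw [hFdef]; simp [hsu]
              rw [hFeq]
              have hQcons : Q (jQ s) = s :: (Q (jQ s)).tail := by
                conv_lhs => rw [← List.cons_head_tail (hQne _)]
                rw [show (Q (jQ s)).head (hQne _) = s from (heQa _).trans hQs]
              have hne : P (iP s) ++ (Q (jQ s)).tail ≠ [] := by simp [hPne]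
              refine ⟨hne, ?_, ?_, fun hh => ⟨?_, ?_⟩⟩
              · simp only [List.Chain']; rw [List.isChain_append]
                refine ⟨(hP _).2.1.imp hAdj', ((hQ _).2.1.tail).imp hAdj', ?_⟩
                intro a ha b hb
                have haa : a = s := by
                  rw [List.getLast?_eq_getLast (hPne (iP s))] at ha
                  simp only [Option.mem_def, Option.some.injEq] at ha
                  rw [← ha, hePa]; exact hPs
                have hc := (hQ (jQ s)).2.1
                rw [hQcons] at hc; simp only [List.Chain'] at hc; rw [List.isChain_cons] at hc
                rw [haa]
                exact hAdj' _ _ (hc.1 b hb)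
              · rw [List.nodup_append']
                refine ⟨(hP _).2.2.1, ((hQ _).2.2.1).sublist (List.tail_sublist _), ?_⟩
                intro x hx hx'
                have hxq : x ∈ Q (jQ s) := List.mem_of_mem_tail hx'
                obtain ⟨_, _, hxh⟩ := hcross _ _ x hx hxq
                have hxs : x = s := hxh.trans hQs
                have hnd := (hQ (jQ s)).2.2.1
                rw [hQcons] at hnd
                exact (List.nodup_cons.mp hnd).1 (hxs ▸ hx')
              · rw [show (P (iP s) ++ (Q (jQ s)).tail).head hne = (P (iP s)).head (hPne _)
                  from head_prefix' ⟨(Q (jQ s)).tail, rfl⟩ (hPne _) hne]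
                exact ((hP _).2.2.2 (hPne _)).1
              · by_cases hqt : (Q (jQ s)).tail = []
                · have hQsing : Q (jQ s) = [s] := by rw [hQcons, hqt]
                  have hl1 : (P (iP s) ++ (Q (jQ s)).tail).getLast? = some s := by
                    rw [hqt, List.append_nil, List.getLast?_eq_getLast (hPne _),
                      hePa, hPs]
                  have hl2 := List.getLast?_eq_getLast hh
                  rw [hl1] at hl2
                  simp only [Option.some.injEq] at hl2
                  rw [← hl2]
                  have hB := ((hQ (jQ s)).2.2.2 (hQne _)).2
                  have h13 : (Q (jQ s)).getLast (hQne _) = s := by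
                    have h9 : (Q (jQ s)).getLast? = some s := by rw [hQsing]; rfl
                    have h10 := List.getLast?_eq_getLast (hQne (jQ s))
                    rw [h9] at h10
                    simpa using h10.symm
                  rw [← h13]
                  exact hB
                · have hne2 : (Q (jQ s)).tail ≠ [] := hqt
                  have hsuf1 : (Q (jQ s)).tail <:+ P (iP s) ++ (Q (jQ s)).tail :=
                    ⟨P (iP s), rfl⟩
                  have hsuf2 : (Q (jQ s)).tail <:+ Q (jQ s) :=
                    ⟨[s], by simpa using hQcons.symm⟩
                  rw [getLast_suffix' hsuf1 hne2 hne,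
                    ← getLast_suffix' hsuf2 hne2 (hQne _)]
                  exact ((hQ (jQ s)).2.2.2 (hQne _)).2
          have hFdisj : ∀ s ∈ insert u S, ∀ t ∈ insert u S, s ≠ t →
              (F s).Disjoint (F t) := by
            intro s hs t ht hst x hxs hxt
            have hiPne : iP s ≠ iP t := fun h => hst (by rw [← hiP s hs, ← hiP t ht, h])
            have hσne : σ s ≠ σ t := by
              by_cases hsu : s = u
              · have htu : t ≠ u := by rw [← hsu]; exact fun h => hst h.symm
                have htS : t ∈ S := by
                  rcases Finset.mem_insert.mp ht with h | h
                  · exact absurd h htu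
                  · exact h
                rw [hsu, hσu, hσs t htu]
                intro h
                exact hvS (h ▸ htS)
              · by_cases htu : t = u
                · have hsS : s ∈ S := by
                    rcases Finset.mem_insert.mp hs with h | h
                    · exact absurd h hsu
                    · exact h
                  rw [htu, hσu, hσs s hsu]
                  intro h
                  exact hvS (h ▸ hsS)
                · rw [hσs s hsu, hσs t htu]
                  exact hst
            have hjQne : jQ (σ s) ≠ jQ (σ t) :=
              fun h => hσne (by rw [← heQσ s hs, ← heQσ t ht, h])
            rcases hFsub s x hxs with h1 | h1 <;> rcases hFsub t x hxt with h2 | h2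
            · exact hPd _ _ hiPne h1 h2
            · obtain ⟨hxS, hxe, hxq⟩ := hcross _ _ x h1 h2
              have hx1 : x = s := hxe.trans (hiP s hs)
              have hx2 : x = σ t := hxq.trans (heQσ t ht)
              by_cases htu : t = u
              · rw [htu, hσu] at hx2
                rw [hx2] at hxS
                exact hvS (by simpa using hxS)
              · rw [hσs t htu] at hx2
                exact hst (hx1.symm.trans hx2)
            · obtain ⟨hxS, hxe, hxq⟩ := hcross _ _ x h2 h1
              have hx1 : x = t := hxe.trans (hiP t ht)
              have hx2 : x = σ s := hxq.trans (heQσ s hs)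
              by_cases hsu : s = u
              · rw [hsu, hσu] at hx2
                rw [hx2] at hxS
                exact hvS (by simpa using hxS)
              · rw [hσs s hsu] at hx2
                exact hst (hx2.symm.trans hx1)
            · exact hQd _ _ hjQne h1 h2
          refine ⟨fun t => F (((insert u S).equivFin.symm (Fin.cast hcardu.symm t)) : V),
            fun t => hFpath _ (Finset.coe_mem _), ?_⟩
          intro t1 t2 ht
          refine hFdisj _ (Finset.coe_mem _) _ (Finset.coe_mem _) ?_
          intro heq
          apply ht
          have h1 := (insert u S).equivFin.symm.injective (Subtype.ext heq)
          have h2 := congrArg Fin.val h1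
          exact Fin.ext (by simpa using h2)
        exact ⟨D0, hD0dis, hD0card ▸ hglue⟩

end MengerAux

/-- Equivalence between the path-based identifiability condition and the
disconnecting-set condition: under the two path-counting hypotheses, every
minimum `X̄ – ((N \ {wᵢ}) ∪ C̄)` disconnecting set `D` satisfies
`b_{X̄ → {wᵢ} ∪ D} = |D| + 1` and `b_{D → C̄} = |D|`. -/


theorem min_disconnecting_set_properties
    {V : Type*} [Fintype V] (Adj : V → V → Prop) (Xb Cb N : Set V)
    (wi : V) (hwi : wi ∈ N)
    (h1 : maxDisjointPaths Adj Xb (N ∪ Cb) =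
      maxDisjointPaths Adj Xb ((N \ {wi}) ∪ Cb) + 1)
    (h2 : maxDisjointPaths Adj Xb ((N \ {wi}) ∪ Cb) = maxDisjointPaths Adj Xb Cb) :
    ∀ D : Finset V, IsDisconnecting Adj Xb ((N \ {wi}) ∪ Cb) ↑D →
      (∀ D' : Finset V, IsDisconnecting Adj Xb ((N \ {wi}) ∪ Cb) ↑D' →
        D.card ≤ D'.card) →
      maxDisjointPaths Adj Xb ({wi} ∪ ↑D) = D.card + 1 ∧
        maxDisjointPaths Adj (↑D) Cb = D.card := by
  classical
  intro D hDdis hDmin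
  set b := maxDisjointPaths Adj Xb ((N \ {wi}) ∪ Cb) with hb
  obtain ⟨W, hWdis, hWpaths⟩ := MengerAux.menger (V := V)
    (MengerAux.edgeFinset Adj).card Adj le_rfl Xb ((N \ {wi}) ∪ Cb)
  have hDb : D.card = b := by
    have ha1 : b ≤ D.card := MengerAux.le_card_of_disconnecting
      (MengerAux.maxDisjointPaths_spec Adj Xb _) D hDdis
    have ha2 : D.card ≤ W.card := hDmin W hWdis
    have ha3 : W.card ≤ b := MengerAux.le_maxDisjointPaths hWpaths
    omega
  constructor
  · apply le_antisymm
    · refine MengerAux.maxDisjointPaths_le (fun k hk => ?_)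
      have hdis : IsDisconnecting Adj Xb ({wi} ∪ ↑D) ↑(insert wi D) := by
        intro l hl
        refine ⟨l.getLast hl.1, ?_, List.getLast_mem hl.1⟩
        have h := (hl.2.2.2 hl.1).2
        simp only [Finset.coe_insert, ← Set.singleton_union]
        exact h
      have hle := MengerAux.le_card_of_disconnecting hk (insert wi D) hdis
      have hcard := Finset.card_insert_le wi D
      omega
    · have hmem : HasDisjointPaths Adj Xb (N ∪ Cb) (b + 1) := by
        have := MengerAux.maxDisjointPaths_spec Adj Xb (N ∪ Cb)
        rwa [h1] at this
      have hS : ∀ l, IsDiPath Adj Xb (N ∪ Cb) l →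
          ∃ y ∈ l, y ∈ ({wi} ∪ ↑D : Set V) := by
        intro l hl
        have hlast := (hl.2.2.2 hl.1).2
        rcases hlast with hN | hC
        · by_cases hwiq : l.getLast hl.1 = wi
          · exact ⟨wi, hwiq ▸ List.getLast_mem hl.1, Or.inl rfl⟩
          · have hl' : IsDiPath Adj Xb ((N \ {wi}) ∪ Cb) l :=
              ⟨hl.1, hl.2.1, hl.2.2.1, fun h =>
                ⟨(hl.2.2.2 h).1, Or.inl ⟨hN, by simpa using hwiq⟩⟩⟩
            obtain ⟨d, hd1, hd2⟩ := hDdis l hl'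
            exact ⟨d, hd2, Or.inr hd1⟩
        · have hl' : IsDiPath Adj Xb ((N \ {wi}) ∪ Cb) l :=
            ⟨hl.1, hl.2.1, hl.2.2.1, fun h => ⟨(hl.2.2.2 h).1, Or.inr hC⟩⟩
          obtain ⟨d, hd1, hd2⟩ := hDdis l hl'
          exact ⟨d, hd2, Or.inr hd1⟩
      have hcut := MengerAux.hasDisjointPaths_firstCut hmem hS
      have hge := MengerAux.le_maxDisjointPaths hcut
      omega
  · apply le_antisymm
    · refine MengerAux.maxDisjointPaths_le (fun k hk => ?_)
      have hdis : IsDisconnecting Adj (↑D) Cb ↑D := by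
        intro l hl
        exact ⟨l.head hl.1, (hl.2.2.2 hl.1).1, List.head_mem hl.1⟩
      exact MengerAux.le_card_of_disconnecting hk D hdis
    · have hmemC : HasDisjointPaths Adj Xb Cb b := by
        have := MengerAux.maxDisjointPaths_spec Adj Xb Cb
        rwa [← h2] at this
      have hS : ∀ l, IsDiPath Adj Xb Cb l → ∃ y ∈ l, y ∈ (↑D : Set V) := by
        intro l hl
        have hl' : IsDiPath Adj Xb ((N \ {wi}) ∪ Cb) l :=
          ⟨hl.1, hl.2.1, hl.2.2.1, fun h => ⟨(hl.2.2.2 h).1, Or.inr (hl.2.2.2 h).2⟩⟩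
        obtain ⟨d, hd1, hd2⟩ := hDdis l hl'
        exact ⟨d, hd2, hd1⟩
      have hcut := MengerAux.hasDisjointPaths_lastCut hmemC hS
      have hge := MengerAux.le_maxDisjointPaths hcut
      omega
end

section
/- Consider a finite directed graph with vertex subsets X̄, C̄, a distinguished vertex w_i, and a vertex set D with w_i ∉ D such that: (1) there exist |D|+1 pairwise vertex-disjoint paths from X̄ to {w_i} ∪ D, (2) there exist |D| pairwise vertex-disjoint paths from D to C̄, and (3) D is an X̄ – C̄ disconnecting set. Then b_{X̄ → {w_i} ∪ C̄} = 1 + b_{X̄ → C̄}. -/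
section Aux

variable {V : Type*} {Adj : V → V → Prop}

private lemma getLast_append_right {l₁ l₂ : List V} (h2 : l₂ ≠ []) (h : l₁ ++ l₂ ≠ []) :
    (l₁ ++ l₂).getLast h = l₂.getLast h2 := by
  apply Option.some.inj
  rw [← List.getLast?_eq_getLast (l := l₁ ++ l₂) h, ← List.getLast?_eq_getLast (l := l₂) h2]
  exact List.getLast?_append_of_ne_nil _ h2

private lemma head_append_left {l₁ l₂ : List V} (h1 : l₁ ≠ []) (h : l₁ ++ l₂ ≠ []) :
    (l₁ ++ l₂).head h = l₁.head h1 := List.head_append_of_ne_nil h1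

private lemma exists_nodup_path_aux :
    ∀ (n : ℕ) (l : List V), l.length ≤ n → l ≠ [] → l.Chain' Adj →
      ∃ p : List V, p ≠ [] ∧ p.Chain' Adj ∧ p.Nodup ∧
        p.head? = l.head? ∧ p.getLast? = l.getLast? ∧ ∀ v ∈ p, v ∈ l := by
  intro n
  induction n with
  | zero =>
    intro l hl hne _
    exact absurd (List.length_eq_zero_iff.mp (Nat.le_zero.mp hl)) hne
  | succ n ih =>
    intro l hl hne hc
    obtain ⟨x, xs, rfl⟩ := List.exists_cons_of_ne_nil hne
    by_cases hx : x ∈ xs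
    · obtain ⟨u, v, rfl⟩ := List.append_of_mem hx
      have hsuf : (x :: v) <:+ (x :: (u ++ x :: v)) := ⟨x :: u, by simp⟩
      obtain ⟨p, hp1, hp2, hp3, hp4, hp5, hp6⟩ :=
        ih (x :: v) (by simp at hl ⊢; omega) (by simp) (hc.suffix hsuf)
      refine ⟨p, hp1, hp2, hp3, by rw [hp4]; rfl, ?_, fun w hw => hsuf.subset (hp6 w hw)⟩
      rw [hp5]
      have h1 : x :: (u ++ x :: v) = (x :: u) ++ (x :: v) := by simp
      rw [h1, List.getLast?_append_of_ne_nil _ (by simp)]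
    · cases xs with
      | nil =>
        exact ⟨[x], by simp, List.isChain_singleton x, List.nodup_singleton x, rfl, rfl, by simp⟩
      | cons y ys =>
        obtain ⟨p, hp1, hp2, hp3, hp4, hp5, hp6⟩ :=
          ih (y :: ys) (by simp at hl ⊢; omega) (by simp) hc.tail
        have hadj : Adj x y := (List.isChain_cons_cons.mp hc).1
        refine ⟨x :: p, by simp, ?_, ?_, rfl, ?_, ?_⟩
        · apply List.isChain_cons.mpr
          refine ⟨?_, hp2⟩
          intro z hz
          rw [hp4] at hz
          simp only [List.head?_cons, Option.mem_def, Option.some.injEq] at hz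
          rwa [← hz]
        · exact List.nodup_cons.mpr ⟨fun h => hx (hp6 x h), hp3⟩
        · show (x :: p).getLast? = (x :: y :: ys).getLast?
          rw [List.getLast?_cons_cons]
          have h2 : x :: p = [x] ++ p := rfl
          rw [h2, List.getLast?_append_of_ne_nil _ hp1, hp5]
        · intro w hw
          rcases List.mem_cons.mp hw with h | h
          · simp [h]
          · exact List.mem_cons_of_mem _ (hp6 w h)

private lemma discon_mem {Xb Cb DS : Set V} (h3 : IsDisconnecting Adj Xb Cb DS)
    (l : List V) (hne : l ≠ []) (hc : l.Chain' Adj)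
    (hA : l.head hne ∈ Xb) (hB : l.getLast hne ∈ Cb) :
    ∃ v ∈ DS, v ∈ l := by
  obtain ⟨p, hp1, hp2, hp3, hp4, hp5, hp6⟩ :=
    exists_nodup_path_aux l.length l le_rfl hne hc
  have hh : p.head hp1 = l.head hne := by
    have h := hp4
    rw [List.head?_eq_head hp1, List.head?_eq_head hne] at h
    exact Option.some.inj h
  have hl : p.getLast hp1 = l.getLast hne := by
    have h := hp5
    rw [List.getLast?_eq_getLast (l := p) hp1, List.getLast?_eq_getLast (l := l) hne] at h
    exact Option.some.inj h
  obtain ⟨v, hv1, hv2⟩ := h3 p ⟨hp1, hp2, hp3, fun _ => ⟨hh ▸ hA, hl ▸ hB⟩⟩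
  exact ⟨v, hv1, hp6 v hv2⟩

private lemma cross {Xb Cb : Set V} {D : Finset V} (h3 : IsDisconnecting Adj Xb Cb ↑D)
    {P Q : List V} (hPne : P ≠ []) (hPc : P.Chain' Adj) (hPn : P.Nodup)
    (hPX : P.head hPne ∈ Xb)
    (hPD : ∀ w ∈ P, w ∈ D → w = P.getLast hPne)
    (hQne : Q ≠ []) (hQc : Q.Chain' Adj) (hQn : Q.Nodup)
    (hQC : Q.getLast hQne ∈ Cb)
    (hQD : ∀ w ∈ Q, w ∈ D → w = Q.head hQne)
    {v : V} (hvP : v ∈ P) (hvQ : v ∈ Q) (hvD : v ∉ D) : False := by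
  obtain ⟨P₁, P₂, rfl⟩ := List.append_of_mem hvP
  obtain ⟨Q₁, Q₂, rfl⟩ := List.append_of_mem hvQ
  have hWne : (P₁ ++ v :: Q₂ : List V) ≠ [] := by simp
  have hWc : (P₁ ++ v :: Q₂).Chain' Adj := by
    apply List.isChain_append.mpr
    obtain ⟨ha, _, hcr⟩ := List.isChain_append.mp hPc
    refine ⟨ha, hQc.suffix ⟨Q₁, rfl⟩, ?_⟩
    intro a haa b hbb
    simp only [List.head?_cons, Option.mem_def, Option.some.injEq] at hbb
    subst hbb
    exact hcr a haa v (by simp)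
  have hWh : (P₁ ++ v :: Q₂).head hWne ∈ Xb := by
    cases P₁ with
    | nil => exact hPX
    | cons a t => exact hPX
  have hWl : (P₁ ++ v :: Q₂).getLast hWne ∈ Cb := by
    rw [getLast_append_right (by simp) hWne,
        ← getLast_append_right (l₁ := Q₁) (by simp) hQne]
    exact hQC
  have hWD : ∀ w ∈ P₁ ++ v :: Q₂, w ∉ D := by
    intro w hw hwD
    rcases List.mem_append.mp hw with hw1 | hw2
    · have hwP : w ∈ P₁ ++ v :: P₂ := List.mem_append_left _ hw1
      have hlastw := hPD w hwP hwD
      rw [getLast_append_right (l₂ := v :: P₂) (by simp) hPne] at hlastw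
      have hdisj := (List.nodup_append'.mp hPn).2.2
      exact hdisj hw1 (hlastw ▸ List.getLast_mem (l := v :: P₂) (by simp))
    · rcases List.mem_cons.mp hw2 with rfl | hw2
      · exact hvD hwD
      · have hwQ : w ∈ Q₁ ++ v :: Q₂ := List.mem_append_right _ (List.mem_cons_of_mem _ hw2)
        have hwh := hQD w hwQ hwD
        cases Q₁ with
        | nil =>
          simp at hwh
          exact hvD (hwh ▸ hwD)
        | cons a t =>
          have hh : ((a :: t) ++ v :: Q₂).head hQne = a := rfl
          rw [hh] at hwh
          have hQn' : ((a :: t) ++ (v :: Q₂)).Nodup := hQn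
          have hdisj := (List.nodup_append'.mp hQn').2.2
          exact hdisj (List.mem_cons_self) (hwh ▸ List.mem_cons_of_mem _ hw2)
  obtain ⟨z, hz1, hz2⟩ := discon_mem h3 _ hWne hWc hWh hWl
  exact hWD z hz2 hz1

private lemma getLast_eq_of_getLast? {l : List V} {c : V} (h : l ≠ []) (h2 : l.getLast? = some c) :
    l.getLast h = c := Option.some.inj ((List.getLast?_eq_getLast (l := l) h).symm.trans h2)

private lemma concat_path {Xb Cb : Set V} {P Q : List V}
    (hPne : P ≠ []) (hPc : P.Chain' Adj) (hPn : P.Nodup) (hPX : P.head hPne ∈ Xb)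
    (hQne : Q ≠ []) (hQc : Q.Chain' Adj) (hQn : Q.Nodup) (hQC : Q.getLast hQne ∈ Cb)
    (hlink : P.getLast hPne = Q.head hQne)
    (hint : ∀ w ∈ P, w ∈ Q → w = Q.head hQne) :
    IsDiPath Adj Xb Cb (P ++ Q.tail) := by
  obtain ⟨q, qt, rfl⟩ := List.exists_cons_of_ne_nil hQne
  have hq : (q :: qt).head hQne = q := rfl
  have hne : P ++ (q :: qt).tail ≠ [] := by simp [hPne]
  refine ⟨hne, ?_, ?_, fun h => ⟨?_, ?_⟩⟩
  · apply List.isChain_append.mpr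
    refine ⟨hPc, hQc.tail, ?_⟩
    intro a ha b hb
    rw [List.getLast?_eq_getLast (l := P) hPne] at ha
    simp only [Option.mem_def, Option.some.injEq] at ha
    have h2 := (List.isChain_cons.mp hQc).1 b hb
    rw [← ha, hlink, hq]
    exact h2
  · rw [List.nodup_append']
    refine ⟨hPn, (List.nodup_cons.mp hQn).2, ?_⟩
    intro w hwP hwT
    have hwQ : w ∈ q :: qt := List.mem_cons_of_mem _ hwT
    have hw := hint w hwP hwQ
    rw [hq] at hw
    subst hw
    exact (List.nodup_cons.mp hQn).1 hwT
  · rw [head_append_left hPne h]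
    exact hPX
  · simp only [List.tail_cons] at h ⊢
    cases qt with
    | nil =>
      have h2 : (P ++ ([] : List V)).getLast? = some (P.getLast hPne) := by
        rw [List.append_nil]
        exact List.getLast?_eq_getLast (l := P) hPne
      rw [getLast_eq_of_getLast? h h2, hlink, hq]
      exact hQC
    | cons b bt =>
      rw [getLast_append_right (by simp) h, ← List.getLast_cons (a := q) (by simp)]
      exact hQC

end Aux

/-- Composition of vertex-disjoint path systems through a disconnecting set:
if `D` (with `wᵢ ∉ D`) admits `|D| + 1` disjoint paths from `X̄` to `{wᵢ} ∪ D`,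
`|D|` disjoint paths from `D` to `C̄`, and `D` disconnects `X̄` from `C̄`, then
`b_{X̄ → {wᵢ} ∪ C̄} = 1 + b_{X̄ → C̄}`. -/
theorem maxDisjointPaths_insert_eq_succ
    {V : Type*} [Fintype V] (Adj : V → V → Prop) (Xb Cb : Set V)
    (wi : V) (D : Finset V) (hwi : wi ∉ D)
    (h1 : HasDisjointPaths Adj Xb ({wi} ∪ ↑D) (D.card + 1))
    (h2 : HasDisjointPaths Adj (↑D) Cb D.card)
    (h3 : IsDisconnecting Adj Xb Cb ↑D) :
    maxDisjointPaths Adj Xb ({wi} ∪ Cb) = 1 + maxDisjointPaths Adj Xb Cb := by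
  classical
  obtain ⟨f, hf, hfd⟩ := h1
  obtain ⟨g, hg, hgd⟩ := h2
  have fne : ∀ i, f i ≠ [] := fun i => (hf i).1
  have gne : ∀ j, g j ≠ [] := fun j => (hg j).1
  set E : Fin (D.card + 1) → V := fun i => (f i).getLast (fne i) with hE
  set S : Fin D.card → V := fun j => (g j).head (gne j) with hS
  have hEmem : ∀ i, E i ∈ insert wi D := by
    intro i
    have h := ((hf i).2.2.2 (fne i)).2
    rw [Set.mem_union] at h
    rcases h with h | h
    · rw [Set.mem_singleton_iff] at h
      rw [hE]
      simp only []
      rw [show (f i).getLast (fne i) = wi from h]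
      exact Finset.mem_insert_self wi D
    · exact Finset.mem_insert_of_mem h
  have hEinj : Function.Injective E := by
    intro i j hij
    by_contra hne
    have ha : E i ∈ f i := List.getLast_mem (fne i)
    have hb : E i ∈ f j := by rw [hij]; exact List.getLast_mem (fne j)
    exact hfd i j hne ha hb
  have hSinj : Function.Injective S := by
    intro i j hij
    by_contra hne
    have ha : S i ∈ g i := List.head_mem (gne i)
    have hb : S i ∈ g j := by rw [hij]; exact List.head_mem (gne j)
    exact hgd i j hne ha hb
  have hSD : ∀ j, S j ∈ D := fun j => ((hg j).2.2.2 (gne j)).1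
  have hcard : Fintype.card {x // x ∈ insert wi D} = D.card + 1 := by
    rw [Fintype.card_coe, Finset.card_insert_of_notMem hwi]
  let E' : Fin (D.card + 1) → {x // x ∈ insert wi D} := fun i => ⟨E i, hEmem i⟩
  have hE'bij : Function.Bijective E' := by
    rw [Fintype.bijective_iff_injective_and_card]
    exact ⟨fun i j h => hEinj (congrArg Subtype.val h), by rw [Fintype.card_fin, hcard]⟩
  let S' : Fin D.card → {x // x ∈ D} := fun j => ⟨S j, hSD j⟩
  have hS'surj : Function.Surjective S' := by
    have hb : Function.Bijective S' := by
      rw [Fintype.bijective_iff_injective_and_card]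
      exact ⟨fun i j h => hSinj (congrArg Subtype.val h), by rw [Fintype.card_fin, Fintype.card_coe]⟩
    exact hb.2
  have hfD : ∀ i, ∀ w ∈ f i, w ∈ D → w = E i := by
    intro i w hw hwD
    obtain ⟨i', hi'⟩ := hE'bij.2 ⟨w, Finset.mem_insert_of_mem hwD⟩
    have hwE : E i' = w := congrArg Subtype.val hi'
    rcases eq_or_ne i i' with rfl | hne'
    · exact hwE.symm
    · exfalso
      have hb : w ∈ f i' := by rw [← hwE]; exact List.getLast_mem (fne i')
      exact hfd i i' hne' hw hb
  have hgD : ∀ j, ∀ w ∈ g j, w ∈ D → w = S j := by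
    intro j w hw hwD
    obtain ⟨j', hj'⟩ := hS'surj ⟨w, hwD⟩
    have hwS : S j' = w := congrArg Subtype.val hj'
    rcases eq_or_ne j j' with rfl | hne'
    · exact hwS.symm
    · exfalso
      have hb : w ∈ g j' := by rw [← hwS]; exact List.head_mem (gne j')
      exact hgd j j' hne' hw hb
  have hcross : ∀ i j, ∀ v ∈ f i, v ∈ g j → v = E i ∧ v = S j := by
    intro i j v hvf hvg
    by_cases hvD : v ∈ D
    · exact ⟨hfD i v hvf hvD, hgD j v hvg hvD⟩
    · exact (cross h3 (fne i) (hf i).2.1 (hf i).2.2.1 ((hf i).2.2.2 (fne i)).1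
        (hfD i) (gne j) (hg j).2.1 (hg j).2.2.1 ((hg j).2.2.2 (gne j)).2
        (hgD j) hvf hvg hvD).elim
  let eqv := Equiv.ofBijective E' hE'bij
  let iw := eqv.symm ⟨wi, Finset.mem_insert_self wi D⟩
  have hEiw : E iw = wi := congrArg Subtype.val (eqv.apply_symm_apply ⟨wi, Finset.mem_insert_self wi D⟩)
  let ij : Fin D.card → Fin (D.card + 1) :=
    fun j => eqv.symm ⟨S j, Finset.mem_insert_of_mem (hSD j)⟩
  have hEij : ∀ j, E (ij j) = S j :=
    fun j => congrArg Subtype.val (eqv.apply_symm_apply _)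
  have hijinj : Function.Injective ij := by
    intro a b h
    have h2 := eqv.symm.injective h
    exact hSinj (congrArg Subtype.val h2)
  have hijne : ∀ j, ij j ≠ iw := by
    intro j h
    have h2 : S j = wi := congrArg Subtype.val (eqv.symm.injective h)
    exact hwi (h2 ▸ hSD j)
  let R : Fin D.card → List V := fun j => f (ij j) ++ (g j).tail
  have hR : ∀ j, IsDiPath Adj Xb Cb (R j) := by
    intro j
    apply concat_path (fne (ij j)) (hf _).2.1 (hf _).2.2.1 ((hf _).2.2.2 (fne (ij j))).1
      (gne j) (hg j).2.1 (hg j).2.2.1 ((hg j).2.2.2 (gne j)).2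
    · exact hEij j
    · intro w hw hwq
      exact (hcross _ j w hw hwq).2
  have hRmem : ∀ j, ∀ v ∈ R j, v ∈ f (ij j) ∨ v ∈ g j := by
    intro j v hv
    rcases List.mem_append.mp hv with h | h
    · exact Or.inl h
    · exact Or.inr (List.mem_of_mem_tail h)
  have hRdisj : ∀ a b, a ≠ b → (R a).Disjoint (R b) := by
    intro a b hab v hva hvb
    rcases hRmem a v hva with h1 | h1 <;> rcases hRmem b v hvb with h2 | h2
    · exact hfd _ _ (fun h => hab (hijinj h)) h1 h2
    · obtain ⟨hva', hvb'⟩ := hcross _ _ v h1 h2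
      have hss : S a = S b := by rw [← hEij a, ← hva', hvb']
      exact hab (hSinj hss)
    · obtain ⟨hva', hvb'⟩ := hcross _ _ v h2 h1
      have hss : S b = S a := by rw [← hEij b, ← hva', hvb']
      exact hab (hSinj hss).symm
    · exact hgd a b hab h1 h2
  have claimA : HasDisjointPaths Adj Xb Cb D.card := ⟨R, hR, hRdisj⟩
  have claimB : HasDisjointPaths Adj Xb ({wi} ∪ Cb) (D.card + 1) := by
    refine ⟨fun i => if h : (i : ℕ) < D.card then R ⟨i, h⟩ else f iw, ?_, ?_⟩
    · intro i
      dsimp only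
      by_cases h : (i : ℕ) < D.card
      · rw [dif_pos h]
        obtain ⟨a1, a2, a3, a4⟩ := hR ⟨i, h⟩
        exact ⟨a1, a2, a3, fun hh => ⟨(a4 hh).1, Or.inr (a4 hh).2⟩⟩
      · rw [dif_neg h]
        obtain ⟨a1, a2, a3, a4⟩ := hf iw
        refine ⟨a1, a2, a3, fun hh => ⟨(a4 hh).1, Or.inl ?_⟩⟩
        rw [Set.mem_singleton_iff]
        exact hEiw
    · intro a b hab v hva hvb
      dsimp only at hva hvb
      by_cases ha : (a : ℕ) < D.card <;> by_cases hb : (b : ℕ) < D.card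
      · rw [dif_pos ha] at hva
        rw [dif_pos hb] at hvb
        refine hRdisj _ _ (fun h => hab ?_) hva hvb
        have h2 := congrArg Fin.val h
        exact Fin.ext h2
      · rw [dif_pos ha] at hva
        rw [dif_neg hb] at hvb
        rcases hRmem _ v hva with h1 | h1
        · exact hfd _ _ (hijne _) h1 hvb
        · obtain ⟨hv1, hv2⟩ := hcross iw _ v hvb h1
          have hww : wi = S ⟨a, ha⟩ := by rw [← hEiw, ← hv1, hv2]
          exact hwi (by rw [hww]; exact hSD _)
      · rw [dif_neg ha] at hva
        rw [dif_pos hb] at hvb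
        rcases hRmem _ v hvb with h1 | h1
        · exact hfd _ _ (hijne _) h1 hva
        · obtain ⟨hv1, hv2⟩ := hcross iw _ v hva h1
          have hww : wi = S ⟨b, hb⟩ := by rw [← hEiw, ← hv1, hv2]
          exact hwi (by rw [hww]; exact hSD _)
      · exact hab (Fin.ext (by have := a.isLt; have := b.isLt; omega))
  have ub1 : ∀ k, HasDisjointPaths Adj Xb Cb k → k ≤ D.card := by
    intro k hk
    obtain ⟨h, hh, hhd⟩ := hk
    have hpick : ∀ i, ∃ v, v ∈ D ∧ v ∈ h i := by
      intro i
      obtain ⟨v, hv1, hv2⟩ := h3 (h i) (hh i)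
      exact ⟨v, hv1, hv2⟩
    choose φ hφ1 hφ2 using hpick
    have hinj : Function.Injective (fun i => (⟨φ i, hφ1 i⟩ : {x // x ∈ D})) := by
      intro a b hab
      by_contra hne
      have hvv : φ a = φ b := congrArg Subtype.val hab
      exact hhd a b hne (hφ2 a) (hvv ▸ hφ2 b)
    calc k = Fintype.card (Fin k) := (Fintype.card_fin k).symm
      _ ≤ Fintype.card {x // x ∈ D} := Fintype.card_le_of_injective _ hinj
      _ = D.card := Fintype.card_coe D
  have ub2 : ∀ k, HasDisjointPaths Adj Xb ({wi} ∪ Cb) k → k ≤ D.card + 1 := by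
    intro k hk
    obtain ⟨h, hh, hhd⟩ := hk
    have hpick : ∀ i, wi ∉ h i → ∃ v, v ∈ D ∧ v ∈ h i := by
      intro i hwim
      obtain ⟨hne, hc, hn, he⟩ := hh i
      have hend : (h i).getLast hne ∈ Cb := by
        have hcase := (he hne).2
        rw [Set.mem_union] at hcase
        rcases hcase with hcase | hcase
        · exfalso
          rw [Set.mem_singleton_iff] at hcase
          exact hwim (hcase ▸ List.getLast_mem hne)
        · exact hcase
      obtain ⟨v, hv1, hv2⟩ := h3 (h i) ⟨hne, hc, hn, fun _ => ⟨(he hne).1, hend⟩⟩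
      exact ⟨v, hv1, hv2⟩
    choose ψ hψ1 hψ2 using hpick
    have hex : ∃ φ : Fin k → Option {x // x ∈ D}, Function.Injective φ := by
      refine ⟨fun i => if hmem : wi ∈ h i then none else some ⟨ψ i hmem, hψ1 i hmem⟩, ?_⟩
      intro a b hab
      dsimp only at hab
      by_contra hne
      by_cases haw : wi ∈ h a <;> by_cases hbw : wi ∈ h b
      · exact hhd a b hne haw hbw
      · rw [dif_pos haw, dif_neg hbw] at hab
        cases hab
      · rw [dif_neg haw, dif_pos hbw] at hab
        cases hab
      · rw [dif_neg haw, dif_neg hbw] at hab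
        have hv : ψ a haw = ψ b hbw := congrArg Subtype.val (Option.some.inj hab)
        exact hhd a b hne (hψ2 a haw) (hv.symm ▸ hψ2 b hbw)
    obtain ⟨φ, hφ⟩ := hex
    calc k = Fintype.card (Fin k) := (Fintype.card_fin k).symm
      _ ≤ Fintype.card (Option {x // x ∈ D}) := Fintype.card_le_of_injective _ hφ
      _ = D.card + 1 := by rw [Fintype.card_option, Fintype.card_coe]
  have e1 : maxDisjointPaths Adj Xb Cb = D.card := by
    apply le_antisymm
    · exact csSup_le ⟨D.card, claimA⟩ (fun k hk => ub1 k hk)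
    · exact le_csSup ⟨D.card, fun k hk => ub1 k hk⟩ claimA
  have e2 : maxDisjointPaths Adj Xb ({wi} ∪ Cb) = D.card + 1 := by
    apply le_antisymm
    · exact csSup_le ⟨D.card + 1, claimB⟩ (fun k hk => ub2 k hk)
    · exact le_csSup ⟨D.card + 1, fun k hk => ub2 k hk⟩ claimB
  rw [e1, e2, Nat.add_comm]
end

section
/- Let A be the adjacency-weight matrix of a finite directed acyclic graph on vertex set V over a commutative ring, so that A is nilpotent and T = (I−A)⁻¹ = I + A + A² + ⋯ exists, with T_{wv} equal to the sum over all directed paths from v to w of the product of edge weights. Let X, W, D ⊆ V and suppose every directed path from a vertex of X to a vertex of W contains a vertex of D. Then there exists a matrix K (with rows indexed by W and columns by D) such that T_{W,X} = K · T_{D,X}, where T_{W,X} and T_{D,X} denote the corresponding submatrices of T. -/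
section Aux

open List in
/-- From `[a,a] <+ l` extract an infix cycle `a :: u ++ [a]`. -/
lemma pair_sublist_infix {α : Type*} {a : α} :
    ∀ {l : List α}, [a, a] <+ l → ∃ u : List α, (a :: (u ++ [a])) <:+: l := by
  intro l h
  induction l with
  | nil => simp at h
  | cons b t ih =>
    cases h with
    | cons _ h' =>
      obtain ⟨u, hu⟩ := ih h'
      exact ⟨u, List.infix_cons hu⟩
    | cons_cons _ h' =>
      have ha : a ∈ t := (List.singleton_sublist).mp h'
      obtain ⟨s, t', ht⟩ := List.append_of_mem ha
      refine ⟨s, ?_⟩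
      rw [ht]
      exact ⟨[], t', by simp⟩

variable {V : Type*} [Fintype V] [DecidableEq V] {R : Type*} [CommRing R]

/-- Any chain of nonzero edges in an acyclic weighted digraph has no duplicates. -/
lemma chain'_nodup (A : Matrix V V R)
    (hacyc : ∀ l : List V, l.Chain' (fun v w => A w v ≠ 0) →
      2 ≤ l.length → l.head? ≠ l.getLast?)
    (l : List V) (hl : l.Chain' (fun v w => A w v ≠ 0)) : l.Nodup := by
  by_contra h
  rw [List.nodup_iff_sublist] at h
  push_neg at h
  obtain ⟨a, ha⟩ := h
  obtain ⟨u, hu⟩ := pair_sublist_infix ha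
  have hchain := hl.infix hu
  have hlen : 2 ≤ (a :: (u ++ [a])).length := by
    simp only [List.length_cons, List.length_append, List.length_singleton]
    omega
  exact hacyc _ hchain hlen (by
    show some a = ((a :: u) ++ [a]).getLast?
    rw [List.getLast?_concat])

/-- Nonzero entries of powers of the `D`-row-killed matrix come from chains. -/
lemma pow_entry_chain (A : Matrix V V R) (D : Finset V) :
    ∀ (k : ℕ) (w v : V),
      ((Matrix.of fun w v => if w ∈ D then 0 else A w v) ^ k) w v ≠ 0 →
      ∃ l : List V, l.Chain' (fun a b => A b a ≠ 0) ∧ l.head? = some v ∧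
        l.getLast? = some w ∧ l.length = k + 1 ∧ ∀ u ∈ l.tail, u ∉ D := by
  intro k
  induction k with
  | zero =>
    intro w v h
    rw [pow_zero] at h
    have hwv : w = v := by
      by_contra hne
      rw [Matrix.one_apply_ne hne] at h
      exact h rfl
    subst hwv
    exact ⟨[w], List.isChain_singleton _, by simp⟩
  | succ k ih =>
    intro w v h
    rw [pow_succ, Matrix.mul_apply] at h
    obtain ⟨u, -, hu⟩ := Finset.exists_ne_zero_of_sum_ne_zero h
    have h1 : ((Matrix.of fun w v => if w ∈ D then 0 else A w v) ^ k) w u ≠ 0 :=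
      left_ne_zero_of_mul hu
    have h2 : (Matrix.of fun w v => if w ∈ D then 0 else A w v) u v ≠ 0 :=
      right_ne_zero_of_mul hu
    have hu_nD : u ∉ D := by
      intro hmem
      exact h2 (by simp [Matrix.of_apply, hmem])
    have hAuv : A u v ≠ 0 := by
      intro h0
      exact h2 (by simp [Matrix.of_apply, h0])
    obtain ⟨l, hc, hhead, hlast, hlen, htail⟩ := ih w u h1
    cases l with
    | nil => simp at hhead
    | cons a rest =>
      have hau : a = u := by simpa using hhead
      subst hau
      refine ⟨v :: a :: rest, ?_, rfl, ?_, ?_, ?_⟩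
      · exact List.isChain_cons_cons.mpr ⟨hAuv, hc⟩
      · rw [List.getLast?_cons_cons]; exact hlast
      · simpa using hlen
      · intro z hz
        rcases List.mem_cons.mp hz with rfl | hz
        · exact hu_nD
        · exact htail z hz

end Aux

/-- Factorization of the transfer matrix through a disconnecting set in an
acyclic weighted digraph: if `A` is the (nilpotent) adjacency-weight matrix of
an acyclic directed graph (edge `v → w` iff `A w v ≠ 0`), `T = (I - A)⁻¹`, and
every directed path from `X` to `W` contains a vertex of `D`, then
`T_{W,X} = K * T_{D,X}` for some matrix `K`. -/
theorem transfer_factors_through_disconnecting_set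
    {V : Type*} [Fintype V] [DecidableEq V] {R : Type*} [CommRing R]
    (A T : Matrix V V R)
    (hnil : IsNilpotent A)
    (hacyc : ∀ l : List V, l.Chain' (fun v w => A w v ≠ 0) →
      2 ≤ l.length → l.head? ≠ l.getLast?)
    (hT : (1 - A) * T = 1 ∧ T * (1 - A) = 1)
    (X W D : Finset V)
    (hD : ∀ l : List V, IsDiPath (fun v w => A w v ≠ 0) ↑X ↑W l → ∃ v ∈ D, v ∈ l) :
    ∃ K : Matrix W D R,
      T.submatrix (fun w : W => (w : V)) (fun x : X => (x : V)) =
        K * T.submatrix (fun d : D => (d : V)) (fun x : X => (x : V)) := by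
  classical
  set B : Matrix V V R := Matrix.of fun w v => if w ∈ D then 0 else A w v with hB
  set C : Matrix V V R := A - B with hCdef
  -- T = 1 + A * T
  have hAT : T = 1 + A * T := by
    have h1 := hT.1
    rw [sub_mul, one_mul] at h1
    exact eq_add_of_sub_eq h1
  have hATm : A * T = T - 1 := eq_sub_of_add_eq' hAT.symm
  have hTrec : T = 1 + C * T + B * T := by
    calc T = 1 + A * T := hAT
      _ = 1 + (A * T - B * T) + B * T := by abel
      _ = 1 + C * T + B * T := by rw [hCdef, sub_mul]
  -- nilpotency of B
  have hBpow : B ^ (Fintype.card V + 1) = 0 := by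
    ext w v
    rw [Matrix.zero_apply]
    by_contra h
    rw [hB] at h
    obtain ⟨l, hc, -, -, hlen, -⟩ := pow_entry_chain A D _ w v h
    have hnd := chain'_nodup A hacyc l hc
    have := hnd.length_le_card
    omega
  -- telescoping / geometric series identity
  have htel : ∀ m : ℕ, T = (∑ j ∈ Finset.range m, B ^ j) * (1 + C * T) + B ^ m * T := by
    intro m
    induction m with
    | zero => simp
    | succ m ih =>
      calc T = (∑ j ∈ Finset.range m, B ^ j) * (1 + C * T) + B ^ m * T := ih
        _ = (∑ j ∈ Finset.range m, B ^ j) * (1 + C * T) + B ^ m * (1 + C * T + B * T) := by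
            rw [← hTrec]
        _ = (∑ j ∈ Finset.range (m + 1), B ^ j) * (1 + C * T) + B ^ (m + 1) * T := by
            rw [Finset.sum_range_succ, add_mul, pow_succ]
            noncomm_ring
  set S : Matrix V V R := ∑ j ∈ Finset.range (Fintype.card V + 1), B ^ j with hS
  have hfact : T = S * (1 + C * T) := by
    have h := htel (Fintype.card V + 1)
    rw [hBpow, zero_mul, add_zero] at h
    exact h
  -- vanishing of S on W × (X \ D)
  have hSvan : ∀ w ∈ W, ∀ x ∈ X, x ∉ D → S w x = 0 := by
    intro w hw x hx hxD
    rw [hS, Matrix.sum_apply]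
    apply Finset.sum_eq_zero
    intro j _
    by_contra h
    rw [hB] at h
    obtain ⟨l, hc, hhead, hlast, -, htail⟩ := pow_entry_chain A D j w x h
    have hne : l ≠ [] := by rintro rfl; simp at hhead
    have hnd := chain'_nodup A hacyc l hc
    have hhd : l.head hne = x := by
      rw [List.head?_eq_head hne] at hhead
      exact Option.some_injective _ hhead
    have hlst : l.getLast hne = w := by
      rw [List.getLast?_eq_getLast hne] at hlast
      exact Option.some_injective _ hlast
    have hpath : IsDiPath (fun v w => A w v ≠ 0) ↑X ↑W l := by
      refine ⟨hne, hc, hnd, fun h' => ?_⟩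
      constructor
      · show l.head h' ∈ (X : Set V); rw [hhd]; exact_mod_cast hx
      · show l.getLast h' ∈ (W : Set V); rw [hlst]; exact_mod_cast hw
    obtain ⟨d, hdD, hdl⟩ := hD l hpath
    cases l with
    | nil => exact hne rfl
    | cons a rest =>
      have hax : a = x := hhd
      rcases List.mem_cons.mp hdl with rfl | hdl
      · exact hxD (hax ▸ hdD)
      · exact htail d hdl hdD
  -- entrywise formula for T
  have hTe : ∀ w x : V, T w x = S w x + (∑ u ∈ D, S w u * T u x
      - if x ∈ D then S w x else 0) := by
    intro w x
    have hCT : ∀ u : V, (C * T) u x = if u ∈ D then (A * T) u x else 0 := by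
      intro u
      rw [Matrix.mul_apply]
      by_cases hu : u ∈ D
      · simp only [hu, if_true, Matrix.mul_apply]
        apply Finset.sum_congr rfl
        intro v _
        rw [hCdef, Matrix.sub_apply, hB, Matrix.of_apply, if_pos hu, sub_zero]
      · simp only [hu, if_false]
        apply Finset.sum_eq_zero
        intro v _
        rw [hCdef, Matrix.sub_apply, hB, Matrix.of_apply, if_neg hu, sub_self, zero_mul]
    calc T w x = (S * (1 + C * T)) w x := by rw [← hfact]
      _ = S w x + (S * (C * T)) w x := by
          rw [mul_add, mul_one, Matrix.add_apply]
      _ = S w x + ∑ u, S w u * (C * T) u x := by rw [Matrix.mul_apply]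
      _ = S w x + ∑ u ∈ D, S w u * (A * T) u x := by
          congr 1
          have he : ∀ u : V, S w u * (C * T) u x
              = if u ∈ D then S w u * (A * T) u x else 0 := by
            intro u
            rw [hCT u]
            by_cases hu : u ∈ D <;> simp [hu]
          rw [Finset.sum_congr rfl fun u _ => he u, Finset.sum_ite_mem, Finset.univ_inter]
      _ = S w x + (∑ u ∈ D, S w u * T u x - if x ∈ D then S w x else 0) := by
          congr 1
          simp only [hATm, Matrix.sub_apply, mul_sub]
          rw [Finset.sum_sub_distrib]
          congr 1
          have he : ∀ u ∈ D, S w u * (1 : Matrix V V R) u x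
              = if u = x then S w u else 0 := by
            intro u _
            rw [Matrix.one_apply]
            by_cases h : u = x <;> simp [h]
          rw [Finset.sum_congr rfl he, Finset.sum_ite_eq' D x fun u => S w u]
  refine ⟨Matrix.of fun w d => S w.1 d.1, ?_⟩
  ext w x
  rw [Matrix.mul_apply]
  simp only [Matrix.submatrix_apply, Matrix.of_apply]
  have hsum : ∑ d : D, S w.1 d.1 * T d.1 x.1 = ∑ u ∈ D, S w.1 u * T u x.1 :=
    Finset.sum_coe_sort D fun u => S w.1 u * T u x.1
  rw [hsum, hTe w.1 x.1]
  by_cases hx : (x : V) ∈ D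
  · simp [hx]
  · rw [hSvan w.1 w.2 x.1 x.2 hx]
    simp [hx]
end
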